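/- arXiv:1907.01601 — 7 statements merged into one kernel-verified Lean document; each statement's English description precedes it below -/
import Mathlib

section
/- For the recursive model X_{n+1} = (X_{n,1} + ... + X_{n,m} − 1)^+, the sequence E(X_n)/m^n is non-increasing in n and the sequence (E(X_n) − 1/(m−1))/m^n is non-decreasing in n; consequently both sequences converge to a common limit F_∞ ≥ 0 (the free energy), and for every n one has (E(X_n) − 1/(m−1))/m^n ≤ F_∞ ≤ E(X_n)/m^n. -/
open scoped ENNReal

/-- Law of the sum of `n` i.i.d. copies of a `PMF ℕ`. -/
noncomputable def sumIID (p : PMF ℕ) : ℕ → PMF ℕ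
  | 0 => PMF.pure 0
  | (k+1) => (sumIID p k).bind (fun s => p.map (fun a => a + s))

/-- One step of the Derrida–Retaux recursion: `X' = (X_1 + ⋯ + X_m − 1)⁺`. -/
noncomputable def step (m : ℕ) (p : PMF ℕ) : PMF ℕ :=
  (sumIID p m).map (fun s => s - 1)

/-- Real-valued expectation of a `PMF ℕ`. -/
noncomputable def realE (p : PMF ℕ) : ℝ := (∑' k, p k * (k : ℝ≥0∞)).toReal

lemma tsum_bind (p : PMF ℕ) (q : ℕ → PMF ℕ) (g : ℕ → ℝ≥0∞) :
    ∑' k, (p.bind q) k * g k = ∑' a, p a * ∑' k, q a k * g k := by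
  have h : ∀ k, (p.bind q) k * g k = ∑' a, p a * (q a k * g k) := fun k => by
    rw [PMF.bind_apply, ← ENNReal.tsum_mul_right]
    exact tsum_congr fun a => mul_assoc _ _ _
  rw [tsum_congr h, ENNReal.tsum_comm]
  exact tsum_congr fun a => ENNReal.tsum_mul_left

lemma tsum_pure (b : ℕ) (g : ℕ → ℝ≥0∞) : ∑' k, (PMF.pure b) k * g k = g b := by
  rw [tsum_eq_single b fun k hk => by rw [PMF.pure_apply, if_neg hk, zero_mul]]
  rw [PMF.pure_apply, if_pos rfl, one_mul]

lemma tsum_map (p : PMF ℕ) (f : ℕ → ℕ) (g : ℕ → ℝ≥0∞) :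
    ∑' k, (p.map f) k * g k = ∑' a, p a * g (f a) := by
  rw [show p.map f = p.bind (fun a => PMF.pure (f a)) from rfl, tsum_bind]
  exact tsum_congr fun a => by rw [tsum_pure]

lemma Einf_sumIID (p : PMF ℕ) (k : ℕ) :
    ∑' s, (sumIID p k) s * (s : ℝ≥0∞) = k * ∑' a, p a * (a : ℝ≥0∞) := by
  induction k with
  | zero => simp [sumIID]
  | succ k ih =>
    rw [show sumIID p (k+1) = (sumIID p k).bind (fun s => p.map (fun a => a + s)) from rfl]
    rw [tsum_bind]
    have h1 : ∀ s : ℕ, (∑' k', (p.map (fun a => a + s)) k' * (k' : ℝ≥0∞))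
        = (∑' a, p a * (a : ℝ≥0∞)) + s := by
      intro s
      rw [tsum_map]
      simp_rw [Nat.cast_add, mul_add]
      rw [ENNReal.tsum_add, ENNReal.tsum_mul_right, p.tsum_coe, one_mul]
    simp_rw [h1, mul_add]
    rw [ENNReal.tsum_add, ENNReal.tsum_mul_right, (sumIID p k).tsum_coe, one_mul, ih]
    push_cast
    ring

lemma Einf_step_le (m : ℕ) (p : PMF ℕ) :
    ∑' s, (step m p) s * (s : ℝ≥0∞) ≤ m * ∑' a, p a * (a : ℝ≥0∞) := by
  rw [← Einf_sumIID, step, tsum_map]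
  exact Summable.tsum_le_tsum (fun s => mul_le_mul_right (Nat.cast_le.2 (Nat.sub_le s 1)) _)
    ENNReal.summable ENNReal.summable

lemma le_Einf_step (m : ℕ) (p : PMF ℕ) :
    (m : ℝ≥0∞) * ∑' a, p a * (a : ℝ≥0∞) ≤ (∑' s, (step m p) s * (s : ℝ≥0∞)) + 1 := by
  rw [← Einf_sumIID, step, tsum_map]
  calc ∑' s, (sumIID p m) s * (s : ℝ≥0∞)
      ≤ ∑' s, (sumIID p m) s * (((s - 1 : ℕ) : ℝ≥0∞) + 1) := by
        refine Summable.tsum_le_tsum (fun s => mul_le_mul_right ?_ _) ENNReal.summable ENNReal.summable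
        calc (s : ℝ≥0∞) ≤ ((s - 1 + 1 : ℕ) : ℝ≥0∞) := Nat.cast_le.2 (by omega)
          _ = ((s - 1 : ℕ) : ℝ≥0∞) + 1 := by push_cast; ring
    _ = ∑' s, ((sumIID p m) s * ((s - 1 : ℕ) : ℝ≥0∞) + (sumIID p m) s) :=
        tsum_congr fun s => by rw [mul_add, mul_one]
    _ = (∑' s, (sumIID p m) s * ((s - 1 : ℕ) : ℝ≥0∞)) + 1 := by
        rw [ENNReal.tsum_add, (sumIID p m).tsum_coe]

lemma main_real (m : ℕ) (hm : 2 ≤ m) (e : ℕ → ℝ) (he : ∀ n, 0 ≤ e n)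
    (k1 : ∀ n, e (n+1) ≤ m * e n) (k2 : ∀ n, m * e n ≤ e (n+1) + 1) :
    Antitone (fun n => e n / (m : ℝ) ^ n) ∧
    Monotone (fun n => (e n - 1 / ((m : ℝ) - 1)) / (m : ℝ) ^ n) ∧
    ∃ F : ℝ, 0 ≤ F ∧
      Filter.Tendsto (fun n => e n / (m : ℝ) ^ n) Filter.atTop (nhds F) ∧
      Filter.Tendsto (fun n => (e n - 1 / ((m : ℝ) - 1)) / (m : ℝ) ^ n)
        Filter.atTop (nhds F) ∧
      ∀ n, (e n - 1 / ((m : ℝ) - 1)) / (m : ℝ) ^ n ≤ F ∧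
        F ≤ e n / (m : ℝ) ^ n := by
  have hm' : (2 : ℝ) ≤ m := by exact_mod_cast hm
  have hm0 : (0 : ℝ) < m := by linarith
  have hne : (m : ℝ) - 1 ≠ 0 := by linarith
  have hmn : (m : ℝ) ≠ 0 := ne_of_gt hm0
  have hc0 : 0 ≤ 1 / ((m : ℝ) - 1) := le_of_lt (div_pos one_pos (by linarith))
  set c : ℝ := 1 / ((m : ℝ) - 1) with hc
  set a : ℕ → ℝ := fun n => e n / (m : ℝ) ^ n with ha_def
  set b : ℕ → ℝ := fun n => (e n - c) / (m : ℝ) ^ n with hb_def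
  have hpn : ∀ n, (0 : ℝ) < (m : ℝ) ^ n := fun n => pow_pos hm0 n
  have ha : Antitone a := by
    refine antitone_nat_of_succ_le fun n => ?_
    have h : a n - a (n+1) = (m * e n - e (n+1)) / (m : ℝ) ^ (n+1) := by
      simp only [ha_def]
      rw [pow_succ]
      field_simp
    have h2 : 0 ≤ (m * e n - e (n+1)) / (m : ℝ) ^ (n+1) :=
      div_nonneg (by linarith [k1 n]) (hpn (n+1)).le
    linarith
  have hb : Monotone b := by
    refine monotone_nat_of_le_succ fun n => ?_
    have h : b (n+1) - b n = (e (n+1) + 1 - m * e n) / (m : ℝ) ^ (n+1) := by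
      simp only [hb_def, hc]
      rw [pow_succ]
      field_simp
      ring
    have h2 : 0 ≤ (e (n+1) + 1 - m * e n) / (m : ℝ) ^ (n+1) :=
      div_nonneg (by linarith [k2 n]) (hpn (n+1)).le
    linarith
  have hba : ∀ n, b n ≤ a n := fun n => by
    simp only [ha_def, hb_def]
    gcongr
    linarith
  have hbdd : BddAbove (Set.range b) := by
    refine ⟨a 0, ?_⟩
    rintro x ⟨n, rfl⟩
    exact (hba n).trans (ha (Nat.zero_le n))
  have htb : Filter.Tendsto b Filter.atTop (nhds (⨆ n, b n)) :=
    tendsto_atTop_ciSup hb hbdd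
  have hdiff : ∀ n, a n = b n + c * ((1:ℝ)/m)^n := fun n => by
    simp only [ha_def, hb_def]
    rw [div_pow, one_pow]
    field_simp
    ring
  have hlim0 : Filter.Tendsto (fun n : ℕ => c * ((1:ℝ)/m)^n) Filter.atTop (nhds 0) := by
    have h := tendsto_pow_atTop_nhds_zero_of_lt_one
      (le_of_lt (div_pos one_pos hm0)) (by rw [div_lt_one hm0]; linarith)
    simpa using h.const_mul c
  have hta : Filter.Tendsto a Filter.atTop (nhds (⨆ n, b n)) := by
    have h := htb.add hlim0
    rw [add_zero] at h
    exact h.congr fun n => (hdiff n).symm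
  refine ⟨ha, hb, ⨆ n, b n, ?_, hta, htb, fun n => ⟨le_ciSup hbdd n, ha.le_of_tendsto hta n⟩⟩
  exact ge_of_tendsto' hta fun n => div_nonneg (he n) (hpn n).le

theorem stmt1 (m : ℕ) (hm : 2 ≤ m) (X : ℕ → PMF ℕ)
    (hX : ∀ n, X (n+1) = step m (X n))
    (h0 : (∑' k, X 0 k * (k : ℝ≥0∞)) < ∞) :
    Antitone (fun n => realE (X n) / (m : ℝ) ^ n) ∧
    Monotone (fun n => (realE (X n) - 1 / ((m : ℝ) - 1)) / (m : ℝ) ^ n) ∧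
    ∃ F : ℝ, 0 ≤ F ∧
      Filter.Tendsto (fun n => realE (X n) / (m : ℝ) ^ n) Filter.atTop (nhds F) ∧
      Filter.Tendsto (fun n => (realE (X n) - 1 / ((m : ℝ) - 1)) / (m : ℝ) ^ n)
        Filter.atTop (nhds F) ∧
      ∀ n, (realE (X n) - 1 / ((m : ℝ) - 1)) / (m : ℝ) ^ n ≤ F ∧
        F ≤ realE (X n) / (m : ℝ) ^ n := by
  have hfin : ∀ n, (∑' k, X n k * (k : ℝ≥0∞)) ≠ ⊤ := by
    intro n
    induction n with
    | zero => exact h0.ne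
    | succ n ih =>
      rw [hX n]
      exact ((Einf_step_le m (X n)).trans_lt
        (ENNReal.mul_lt_top (ENNReal.natCast_lt_top m) ih.lt_top)).ne
  have k1 : ∀ n, realE (X (n+1)) ≤ (m : ℝ) * realE (X n) := by
    intro n
    have h : (∑' k, X (n+1) k * (k : ℝ≥0∞)) ≤ (m : ℝ≥0∞) * ∑' k, X n k * (k : ℝ≥0∞) := by
      rw [hX n]; exact Einf_step_le m (X n)
    have h2 := ENNReal.toReal_mono (ENNReal.mul_ne_top (ENNReal.natCast_ne_top m) (hfin n)) h
    rwa [ENNReal.toReal_mul, ENNReal.toReal_natCast] at h2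
  have k2 : ∀ n, (m : ℝ) * realE (X n) ≤ realE (X (n+1)) + 1 := by
    intro n
    have h : (m : ℝ≥0∞) * (∑' k, X n k * (k : ℝ≥0∞)) ≤ (∑' k, X (n+1) k * (k : ℝ≥0∞)) + 1 := by
      rw [hX n]; exact le_Einf_step m (X n)
    have h2 := ENNReal.toReal_mono
      (ENNReal.add_ne_top.2 ⟨hfin (n+1), ENNReal.one_ne_top⟩) h
    rwa [ENNReal.toReal_mul, ENNReal.toReal_natCast,
      ENNReal.toReal_add (hfin (n+1)) ENNReal.one_ne_top, ENNReal.toReal_one] at h2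
  exact main_real m hm (fun n => realE (X n)) (fun n => ENNReal.toReal_nonneg) k1 k2
end

section
/- Define δ_n := (m−1)·E(X_n · m^{X_n}) − E(m^{X_n}) for the recursive system. If E(X_0 · m^{X_0}) < ∞, then for all n ≥ 0 one has δ_{n+1} = H_n(m)^{m−1} · δ_n, where H_n(m) = E(m^{X_n}); consequently δ_n = δ_0 · ∏_{i=0}^{n−1} H_i(m)^{m−1}. -/
open scoped ENNReal

/-- `H(m) = E(m^X)`. -/
noncomputable def Hm (m : ℕ) (p : PMF ℕ) : ℝ := (∑' k, p k * (m : ℝ≥0∞) ^ k).toReal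

/-- `δ = (m−1)·E(X·m^X) − E(m^X)`. -/
noncomputable def deltaN (m : ℕ) (p : PMF ℕ) : ℝ :=
  ((m : ℝ) - 1) * (∑' k, p k * ((k : ℝ≥0∞) * (m : ℝ≥0∞) ^ k)).toReal - Hm m p

namespace DRaux

noncomputable def A (m : ℕ) (p : PMF ℕ) : ℝ≥0∞ := ∑' k, p k * (m : ℝ≥0∞) ^ k
noncomputable def B (m : ℕ) (p : PMF ℕ) : ℝ≥0∞ :=
  ∑' k, p k * ((k : ℝ≥0∞) * (m : ℝ≥0∞) ^ k)

lemma tsum_bind {α β : Type*} (p : PMF α) (q : α → PMF β) (f : β → ℝ≥0∞) :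
    ∑' b, (p.bind q) b * f b = ∑' a, p a * ∑' b, q a b * f b := by
  simp_rw [PMF.bind_apply]
  calc ∑' b, (∑' a, p a * q a b) * f b
      = ∑' b, ∑' a, p a * q a b * f b := by
        refine tsum_congr fun b => ?_; rw [← ENNReal.tsum_mul_right]
    _ = ∑' a, ∑' b, p a * q a b * f b := ENNReal.tsum_comm
    _ = ∑' a, p a * ∑' b, q a b * f b := by
        refine tsum_congr fun a => ?_
        rw [← ENNReal.tsum_mul_left]; simp_rw [mul_assoc]

lemma tsum_map {α β : Type*} (p : PMF α) (g : α → β) (f : β → ℝ≥0∞) :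
    ∑' b, (p.map g) b * f b = ∑' a, p a * f (g a) := by
  rw [PMF.map, tsum_bind]
  congr 1; ext a; congr 1
  rw [tsum_eq_single (g a)]
  · simp
  · intro b hb; simp [PMF.pure_apply, hb]

end DRaux

namespace DRaux

lemma A_conv (m : ℕ) (p q : PMF ℕ) :
    A m (q.bind fun s => p.map fun a => a + s) = A m p * A m q := by
  rw [A, tsum_bind]
  calc ∑' s, q s * ∑' k, (p.map fun a => a + s) k * (m:ℝ≥0∞)^k
      = ∑' s, q s * ((∑' a, p a * (m:ℝ≥0∞)^a) * (m:ℝ≥0∞)^s) := by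
        refine tsum_congr fun s => ?_
        rw [tsum_map, ← ENNReal.tsum_mul_right]
        simp_rw [pow_add, mul_assoc]
    _ = A m p * A m q := by
        rw [A, A, ← ENNReal.tsum_mul_left]
        refine tsum_congr fun s => ?_; ring

lemma B_conv (m : ℕ) (p q : PMF ℕ) :
    B m (q.bind fun s => p.map fun a => a + s) = B m p * A m q + A m p * B m q := by
  rw [B, tsum_bind]
  calc ∑' s, q s * ∑' k, (p.map fun a => a + s) k * ((k:ℝ≥0∞) * (m:ℝ≥0∞)^k)
      = ∑' s, q s * ((B m p) * (m:ℝ≥0∞)^s + (A m p) * ((s:ℝ≥0∞) * (m:ℝ≥0∞)^s)) := by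
        refine tsum_congr fun s => ?_
        congr 1
        rw [tsum_map]
        have h : ∀ a : ℕ, p a * (((a + s : ℕ) : ℝ≥0∞) * (m:ℝ≥0∞)^(a+s)) =
            p a * ((a:ℝ≥0∞) * (m:ℝ≥0∞)^a) * (m:ℝ≥0∞)^s
              + p a * (m:ℝ≥0∞)^a * ((s:ℝ≥0∞) * (m:ℝ≥0∞)^s) := by
          intro a; push_cast; ring
        simp_rw [h]
        rw [ENNReal.tsum_add, ENNReal.tsum_mul_right, ENNReal.tsum_mul_right]
        rfl
    _ = B m p * A m q + A m p * B m q := by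
        simp_rw [mul_add]
        rw [ENNReal.tsum_add]
        congr 1
        · rw [show B m p * A m q = B m p * ∑' s, q s * (m:ℝ≥0∞)^s from rfl,
            ← ENNReal.tsum_mul_left]
          exact tsum_congr fun s => by ring
        · rw [show A m p * B m q
              = A m p * ∑' s, q s * ((s:ℝ≥0∞) * (m:ℝ≥0∞)^s) from rfl,
            ← ENNReal.tsum_mul_left]
          exact tsum_congr fun s => by ring

lemma A_pure (m : ℕ) : A m (PMF.pure 0) = 1 := by
  rw [A, tsum_eq_single 0] <;> simp +contextual [PMF.pure_apply]

lemma B_pure (m : ℕ) : B m (PMF.pure 0) = 0 := by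
  rw [B, tsum_eq_single 0] <;> simp +contextual [PMF.pure_apply]

lemma A_sumIID (m : ℕ) (p : PMF ℕ) : ∀ k, A m (sumIID p k) = (A m p) ^ k
  | 0 => by rw [sumIID, A_pure, pow_zero]
  | (k+1) => by rw [sumIID, A_conv, A_sumIID m p k, pow_succ, mul_comm]

lemma B_sumIID (m : ℕ) (p : PMF ℕ) :
    ∀ k, B m (sumIID p (k+1)) = (k+1 : ℝ≥0∞) * (A m p) ^ k * B m p
  | 0 => by
      rw [sumIID, B_conv]
      rw [show sumIID p 0 = PMF.pure 0 from rfl, A_pure, B_pure]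
      simp
  | (k+1) => by
      rw [sumIID, B_conv, B_sumIID m p k, A_sumIID]
      push_cast
      ring

end DRaux

namespace DRaux

lemma A_split (m : ℕ) (q : PMF ℕ) :
    A m q = q 0 + ∑' a, q (a+1) * (m:ℝ≥0∞)^(a+1) := by
  rw [A, tsum_eq_zero_add' ENNReal.summable]; simp

lemma A_step (m : ℕ) (hm : 1 ≤ m) (q : PMF ℕ) :
    (m:ℝ≥0∞) * A m (q.map fun s => s - 1) = A m q + ((m - 1 : ℕ) : ℝ≥0∞) * q 0 := by
  have hm1 : ((m - 1 : ℕ) : ℝ≥0∞) + 1 = (m:ℝ≥0∞) := by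
    norm_cast; omega
  have hsplit : A m (q.map fun s => s - 1)
      = q 0 + ∑' a, q (a+1) * (m:ℝ≥0∞)^a := by
    rw [A, tsum_map, tsum_eq_zero_add' ENNReal.summable]; simp
  rw [hsplit, A_split, mul_add, ← ENNReal.tsum_mul_left]
  calc (m:ℝ≥0∞) * q 0 + ∑' a, (m:ℝ≥0∞) * (q (a+1) * (m:ℝ≥0∞)^a)
      = (q 0 + ((m-1:ℕ):ℝ≥0∞) * q 0) + ∑' a, q (a+1) * (m:ℝ≥0∞)^(a+1) := by
        congr 1
        · rw [← hm1]; ring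
        · exact tsum_congr fun a => by rw [pow_succ]; ring
    _ = _ := by ring

lemma B_step (m : ℕ) (q : PMF ℕ) :
    (m:ℝ≥0∞) * B m (q.map fun s => s - 1) + A m q = B m q + q 0 := by
  have hB' : B m (q.map fun s => s - 1)
      = ∑' a, q (a+1) * ((a:ℝ≥0∞) * (m:ℝ≥0∞)^a) := by
    rw [B, tsum_map, tsum_eq_zero_add' ENNReal.summable]; simp
  have hB : B m q
      = ∑' a, q (a+1) * (((a:ℝ≥0∞)+1) * (m:ℝ≥0∞)^(a+1)) := by
    rw [B, tsum_eq_zero_add' ENNReal.summable]; push_cast; simp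
  rw [hB', hB, A_split, ← ENNReal.tsum_mul_left]
  calc (∑' a, (m:ℝ≥0∞) * (q (a+1) * ((a:ℝ≥0∞) * (m:ℝ≥0∞)^a)))
        + (q 0 + ∑' a, q (a+1) * (m:ℝ≥0∞)^(a+1))
      = (∑' a, ((m:ℝ≥0∞) * (q (a+1) * ((a:ℝ≥0∞) * (m:ℝ≥0∞)^a))
          + q (a+1) * (m:ℝ≥0∞)^(a+1))) + q 0 := by
        rw [ENNReal.tsum_add]; ring
    _ = (∑' a, q (a+1) * (((a:ℝ≥0∞)+1) * (m:ℝ≥0∞)^(a+1))) + q 0 := by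
        congr 1
        exact tsum_congr fun a => by rw [pow_succ]; ring

lemma A_le (m : ℕ) (p : PMF ℕ) : A m p ≤ 1 + B m p := by
  rw [A, B, ← p.tsum_coe, ← ENNReal.tsum_add]
  refine ENNReal.tsum_le_tsum fun k => ?_
  have h : (m:ℝ≥0∞)^k ≤ 1 + (k:ℝ≥0∞) * (m:ℝ≥0∞)^k := by
    match k with
    | 0 => simp
    | (n+1) =>
      have h1 : (1:ℝ≥0∞) ≤ ((n+1 : ℕ):ℝ≥0∞) := by
        exact_mod_cast Nat.succ_le_succ (Nat.zero_le n)
      calc (m:ℝ≥0∞)^(n+1) = 1 * (m:ℝ≥0∞)^(n+1) := (one_mul _).symm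
        _ ≤ ((n+1 : ℕ):ℝ≥0∞) * (m:ℝ≥0∞)^(n+1) := mul_le_mul_left h1 _
        _ ≤ 1 + ((n+1 : ℕ):ℝ≥0∞) * (m:ℝ≥0∞)^(n+1) := le_add_self
  calc p k * (m:ℝ≥0∞)^k ≤ p k * (1 + (k:ℝ≥0∞)*(m:ℝ≥0∞)^k) := mul_le_mul_right h _
    _ = p k + p k * ((k:ℝ≥0∞)*(m:ℝ≥0∞)^k) := by rw [mul_add, mul_one]

lemma A_ne_top (m : ℕ) (p : PMF ℕ) (hB : B m p ≠ ∞) : A m p ≠ ∞ :=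
  ne_top_of_le_ne_top (by simp [hB, ENNReal.add_ne_top]) (A_le m p)

end DRaux

namespace DRaux

lemma delta_step (m : ℕ) (hm : 2 ≤ m) (p : PMF ℕ) (hB : B m p ≠ ∞) :
    deltaN m (step m p) = (Hm m p) ^ (m-1) * deltaN m p ∧ B m (step m p) ≠ ∞ := by
  have hm1 : 1 ≤ m := le_trans one_le_two hm
  have hmm : m - 1 + 1 = m := Nat.sub_add_cancel hm1
  set q := sumIID p m with hq
  have hA : A m p ≠ ∞ := A_ne_top m p hB
  have hAq : A m q = A m p ^ m := A_sumIID m p m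
  have hBq : B m q = (m:ℝ≥0∞) * A m p ^ (m-1) * B m p := by
    rw [hq, ← hmm, B_sumIID]
    norm_cast
  have hq0 : q 0 ≠ ∞ := q.apply_ne_top 0
  have hstep : step m p = q.map fun s => s - 1 := rfl
  have eqA : (m:ℝ≥0∞) * A m (step m p) = A m p ^ m + ((m-1:ℕ):ℝ≥0∞) * q 0 := by
    rw [hstep, A_step m hm1 q, hAq]
  have eqB : (m:ℝ≥0∞) * B m (step m p) + A m p ^ m
      = (m:ℝ≥0∞) * A m p ^ (m-1) * B m p + q 0 := by
    rw [← hAq, ← hBq, hstep, B_step m q]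
  -- finiteness of B of the step
  have hRHS : (m:ℝ≥0∞) * A m p ^ (m-1) * B m p + q 0 ≠ ∞ := by
    refine ENNReal.add_ne_top.mpr ⟨?_, hq0⟩
    exact ENNReal.mul_ne_top (ENNReal.mul_ne_top (ENNReal.natCast_ne_top m)
      (ENNReal.pow_ne_top hA)) hB
  have hmBs : (m:ℝ≥0∞) * B m (step m p) ≠ ∞ := by
    refine ne_top_of_le_ne_top hRHS ?_
    calc (m:ℝ≥0∞) * B m (step m p) ≤ (m:ℝ≥0∞) * B m (step m p) + A m p ^ m :=
          le_self_add
      _ = _ := eqB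
  have hBs : B m (step m p) ≠ ∞ := by
    intro h
    rw [h, ENNReal.mul_top (Nat.cast_ne_zero.mpr (by omega) : (m:ℝ≥0∞) ≠ 0)] at hmBs
    exact hmBs rfl
  refine ⟨?_, hBs⟩
  -- pass to reals
  set a := (A m p).toReal
  set b := (B m p).toReal
  set c := (q 0).toReal
  set as := (A m (step m p)).toReal
  set bs := (B m (step m p)).toReal
  have hMne : (m:ℝ) ≠ 0 := by positivity
  have hcast : ((m-1:ℕ):ℝ) = (m:ℝ) - 1 := by
    push_cast [hm1]; ring
  have r1 : (m:ℝ) * as = a ^ m + ((m:ℝ)-1) * c := by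
    have := congrArg ENNReal.toReal eqA
    rwa [ENNReal.toReal_mul, ENNReal.toReal_add (ENNReal.pow_ne_top hA)
        (ENNReal.mul_ne_top (ENNReal.natCast_ne_top _) hq0),
      ENNReal.toReal_mul, ENNReal.toReal_pow, ENNReal.toReal_natCast,
      ENNReal.toReal_natCast, hcast] at this
  have r2 : (m:ℝ) * bs + a ^ m = (m:ℝ) * a ^ (m-1) * b + c := by
    have := congrArg ENNReal.toReal eqB
    rwa [ENNReal.toReal_add hmBs (ENNReal.pow_ne_top hA),
      ENNReal.toReal_add (ENNReal.mul_ne_top (ENNReal.mul_ne_top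
        (ENNReal.natCast_ne_top m) (ENNReal.pow_ne_top hA)) hB) hq0,
      ENNReal.toReal_mul, ENNReal.toReal_mul, ENNReal.toReal_mul,
      ENNReal.toReal_pow, ENNReal.toReal_pow, ENNReal.toReal_natCast] at this
  have ham : a ^ m = a ^ (m-1) * a := by rw [← pow_succ, hmm]
  have hdel : ∀ r : PMF ℕ,
      deltaN m r = ((m:ℝ)-1) * (B m r).toReal - (A m r).toReal := fun r => rfl
  have hHm : Hm m p = a := rfl
  rw [hdel, hdel, hHm]
  have has : as = (a^(m-1)*a + ((m:ℝ)-1)*c)/(m:ℝ) := by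
    rw [eq_div_iff hMne]; rw [ham] at r1; linarith
  have hbs : bs = ((m:ℝ)*a^(m-1)*b + c - a^(m-1)*a)/(m:ℝ) := by
    rw [eq_div_iff hMne]; rw [ham] at r2; linarith
  rw [show (B m (step m p)).toReal = bs from rfl, show (A m (step m p)).toReal = as from rfl,
    show (B m p).toReal = b from rfl, show (A m p).toReal = a from rfl, has, hbs]
  field_simp
  ring

end DRaux
theorem stmt3 (m : ℕ) (hm : 2 ≤ m) (X : ℕ → PMF ℕ)
    (hX : ∀ n, X (n+1) = step m (X n))
    (h0 : (∑' k, X 0 k * ((k : ℝ≥0∞) * (m : ℝ≥0∞) ^ k)) < ∞) :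
    (∀ n, deltaN m (X (n+1)) = (Hm m (X n)) ^ (m - 1) * deltaN m (X n)) ∧
    ∀ n, deltaN m (X n) = deltaN m (X 0) * ∏ i ∈ Finset.range n, (Hm m (X i)) ^ (m - 1) := by
  have hB : ∀ n, DRaux.B m (X n) ≠ ∞ := by
    intro n; induction n with
    | zero => exact h0.ne
    | succ n ih => rw [hX n]; exact (DRaux.delta_step m hm (X n) ih).2
  have part1 : ∀ n, deltaN m (X (n+1)) = (Hm m (X n)) ^ (m-1) * deltaN m (X n) := by
    intro n; rw [hX n]; exact (DRaux.delta_step m hm (X n) (hB n)).1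
  refine ⟨part1, fun n => ?_⟩
  induction n with
  | zero => simp
  | succ n ih => rw [part1 n, ih, Finset.prod_range_succ]; ring
end

section
/- If (m−1)·E(Y_0 · m^{Y_0}) = E(m^{Y_0}) < ∞ (critical system), then for every n ≥ 0 the same identity holds at generation n: (m−1)·E(Y_n · m^{Y_n}) = E(m^{Y_n}) < ∞. -/
open scoped ENNReal

lemma tsum_pure_mul {α : Type*} (c : α) (g : α → ℝ≥0∞) :
    ∑' b, (PMF.pure c) b * g b = g c := by
  rw [tsum_eq_single c]
  · simp [PMF.pure_apply]
  · intro b hb; simp [PMF.pure_apply, hb]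

lemma tsum_bind_mul {α β : Type*} (p : PMF α) (f : α → PMF β) (g : β → ℝ≥0∞) :
    ∑' b, (p.bind f) b * g b = ∑' a, p a * ∑' b, f a b * g b := by
  simp only [PMF.bind_apply]
  calc ∑' b, (∑' a, p a * f a b) * g b
      = ∑' b, ∑' a, p a * f a b * g b := by
        simp [ENNReal.tsum_mul_right]
    _ = ∑' a, ∑' b, p a * f a b * g b := ENNReal.tsum_comm
    _ = ∑' a, p a * ∑' b, f a b * g b := by
        simp [mul_assoc, ENNReal.tsum_mul_left]

lemma tsum_map_mul {α β : Type*} (p : PMF α) (f : α → β) (g : β → ℝ≥0∞) :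
    ∑' b, (p.map f) b * g b = ∑' a, p a * g (f a) := by
  rw [PMF.map, tsum_bind_mul]
  refine tsum_congr fun a => ?_
  rw [Function.comp_apply, tsum_pure_mul]

lemma sumIID_A (p : PMF ℕ) (M : ℝ≥0∞) :
    ∀ k, ∑' s, sumIID p k s * M ^ s = (∑' j, p j * M ^ j) ^ k := by
  intro k
  induction k with
  | zero =>
    show ∑' s, (PMF.pure 0) s * M ^ s = _
    rw [tsum_pure_mul]; simp
  | succ k ih =>
    rw [sumIID, tsum_bind_mul]
    have h1 : ∀ s : ℕ, (∑' b, (p.map (fun a => a + s)) b * M ^ b)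
        = (∑' j, p j * M ^ j) * M ^ s := by
      intro s
      rw [tsum_map_mul]
      simp only [pow_add]
      rw [← ENNReal.tsum_mul_right]
      exact tsum_congr fun a => by ring
    calc ∑' s, sumIID p k s * ∑' b, (p.map (fun a => a + s)) b * M ^ b
        = ∑' s, (∑' j, p j * M ^ j) * (sumIID p k s * M ^ s) := by
          exact tsum_congr fun s => by rw [h1 s]; ring
      _ = (∑' j, p j * M ^ j) * (∑' j, p j * M ^ j) ^ k := by
          rw [ENNReal.tsum_mul_left, ih]
      _ = (∑' j, p j * M ^ j) ^ (k + 1) := by ring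

lemma sumIID_B (p : PMF ℕ) (M : ℝ≥0∞)
    (hc : (M - 1) * (∑' j, p j * ((j : ℝ≥0∞) * M ^ j)) = ∑' j, p j * M ^ j) :
    ∀ k, (M - 1) * (∑' s, sumIID p k s * ((s : ℝ≥0∞) * M ^ s))
      = (k : ℝ≥0∞) * (∑' j, p j * M ^ j) ^ k := by
  intro k
  set A : ℝ≥0∞ := ∑' j, p j * M ^ j with hA
  set B : ℝ≥0∞ := ∑' j, p j * ((j : ℝ≥0∞) * M ^ j) with hB
  induction k with
  | zero =>
    show (M - 1) * ∑' s : ℕ, (PMF.pure (0:ℕ)) s * ((s : ℝ≥0∞) * M ^ s) = _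
    rw [tsum_pure_mul]; simp
  | succ k ih =>
    rw [sumIID, tsum_bind_mul]
    have h1 : ∀ s : ℕ, (∑' b, (p.map (fun a => a + s)) b * ((b : ℝ≥0∞) * M ^ b))
        = B * M ^ s + A * ((s : ℝ≥0∞) * M ^ s) := by
      intro s
      rw [tsum_map_mul]
      have : ∀ a : ℕ, p a * ((((a + s) : ℕ) : ℝ≥0∞) * M ^ (a + s))
          = (p a * ((a : ℝ≥0∞) * M ^ a)) * M ^ s + (p a * M ^ a) * ((s : ℝ≥0∞) * M ^ s) := by
        intro a
        push_cast
        rw [pow_add]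
        ring
      rw [tsum_congr this, ENNReal.tsum_add, ENNReal.tsum_mul_right, ENNReal.tsum_mul_right]
    have h2 : (∑' s, sumIID p k s * ∑' b, (p.map (fun a => a + s)) b * ((b : ℝ≥0∞) * M ^ b))
        = B * A ^ k + A * (∑' s, sumIID p k s * ((s : ℝ≥0∞) * M ^ s)) := by
      calc ∑' s, sumIID p k s * ∑' b, (p.map (fun a => a + s)) b * ((b : ℝ≥0∞) * M ^ b)
          = ∑' s, (B * (sumIID p k s * M ^ s)
              + A * (sumIID p k s * ((s : ℝ≥0∞) * M ^ s))) := by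
            exact tsum_congr fun s => by rw [h1 s]; ring
        _ = B * (∑' s, sumIID p k s * M ^ s)
              + A * (∑' s, sumIID p k s * ((s : ℝ≥0∞) * M ^ s)) := by
            rw [ENNReal.tsum_add, ENNReal.tsum_mul_left, ENNReal.tsum_mul_left]
        _ = B * A ^ k + A * (∑' s, sumIID p k s * ((s : ℝ≥0∞) * M ^ s)) := by
            rw [sumIID_A p M k, ← hA]
    rw [h2, mul_add]
    have e1 : (M - 1) * (B * A ^ k) = A * A ^ k := by rw [← mul_assoc, hc]
    have e2 : (M - 1) * (A * (∑' s, sumIID p k s * ((s : ℝ≥0∞) * M ^ s)))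
        = A * ((k : ℝ≥0∞) * A ^ k) := by
      rw [show (M - 1) * (A * (∑' s, sumIID p k s * ((s : ℝ≥0∞) * M ^ s)))
          = A * ((M - 1) * (∑' s, sumIID p k s * ((s : ℝ≥0∞) * M ^ s))) by ring, ih]
    rw [e1, e2]
    push_cast
    ring

lemma tsum_shift (f : ℕ → ℝ≥0∞) : ∑' n, f n = f 0 + ∑' n, f (n + 1) :=
  tsum_eq_zero_add' ENNReal.summable

lemma shift_A (S : PMF ℕ) (M : ℝ≥0∞) :
    M * (∑' y : ℕ, (S.map (fun s => s - 1)) y * M ^ y) + S 0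
      = M * S 0 + ∑' s : ℕ, S s * M ^ s := by
  rw [tsum_map_mul]
  rw [tsum_shift (fun s => S s * M ^ (s - 1)), tsum_shift (fun s => S s * M ^ s)]
  simp only [Nat.zero_sub, Nat.add_sub_cancel, pow_zero]
  have h : (∑' s : ℕ, S (s + 1) * M ^ (s + 1)) = M * ∑' s : ℕ, S (s + 1) * M ^ s := by
    rw [← ENNReal.tsum_mul_left]
    exact tsum_congr fun s => by rw [pow_succ]; ring
  rw [h]
  ring

lemma shift_B (S : PMF ℕ) (M : ℝ≥0∞) :
    M * (∑' y : ℕ, (S.map (fun s => s - 1)) y * ((y : ℝ≥0∞) * M ^ y)) + ∑' s : ℕ, S s * M ^ s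
      = (∑' s : ℕ, S s * ((s : ℝ≥0∞) * M ^ s)) + S 0 := by
  rw [tsum_map_mul]
  rw [tsum_shift (fun s => S s * (((s - 1 : ℕ) : ℝ≥0∞) * M ^ (s - 1))),
      tsum_shift (fun s => S s * M ^ s),
      tsum_shift (fun s => S s * ((s : ℝ≥0∞) * M ^ s))]
  simp only [Nat.zero_sub, Nat.add_sub_cancel, pow_zero, Nat.cast_zero, zero_mul, mul_zero,
    mul_one, zero_add]
  have h : (∑' s : ℕ, S (s + 1) * (((s + 1 : ℕ) : ℝ≥0∞) * M ^ (s + 1)))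
      = M * (∑' s : ℕ, S (s + 1) * ((s : ℝ≥0∞) * M ^ s)) + M * ∑' s : ℕ, S (s + 1) * M ^ s := by
    rw [← ENNReal.tsum_mul_left, ← ENNReal.tsum_mul_left, ← ENNReal.tsum_add]
    refine tsum_congr fun s => ?_
    push_cast
    rw [pow_succ]
    ring
  rw [h]
  have h2 : (∑' s : ℕ, S (s + 1) * M ^ (s + 1)) = M * ∑' s : ℕ, S (s + 1) * M ^ s := by
    rw [← ENNReal.tsum_mul_left]
    exact tsum_congr fun s => by rw [pow_succ]; ring
  rw [h2]
  ring

lemma step_invariant (m : ℕ) (hm : 2 ≤ m) (p : PMF ℕ)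
    (hc : ((m : ℝ≥0∞) - 1) * (∑' k, p k * ((k : ℝ≥0∞) * (m : ℝ≥0∞) ^ k))
        = ∑' k, p k * (m : ℝ≥0∞) ^ k)
    (hf : (∑' k, p k * (m : ℝ≥0∞) ^ k) < ∞) :
    ((m : ℝ≥0∞) - 1) * (∑' k, step m p k * ((k : ℝ≥0∞) * (m : ℝ≥0∞) ^ k))
        = (∑' k, step m p k * (m : ℝ≥0∞) ^ k)
      ∧ (∑' k, step m p k * (m : ℝ≥0∞) ^ k) < ∞ := by
  set M : ℝ≥0∞ := (m : ℝ≥0∞) with hMdef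
  set S : PMF ℕ := sumIID p m with hSdef
  set A : ℝ≥0∞ := ∑' k, p k * M ^ k with hAdef
  set A' : ℝ≥0∞ := ∑' k, step m p k * M ^ k with hA'def
  set B' : ℝ≥0∞ := ∑' k, step m p k * ((k : ℝ≥0∞) * M ^ k) with hB'def
  set b : ℝ≥0∞ := ∑' s, S s * ((s : ℝ≥0∞) * M ^ s) with hbdef
  have hMtop : M ≠ ∞ := ENNReal.natCast_ne_top m
  have hM1 : (1 : ℝ≥0∞) ≤ M := by
    rw [hMdef]; exact_mod_cast Nat.one_le_of_lt hm
  have hM0 : M ≠ 0 := by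
    rw [hMdef]; exact_mod_cast (by omega : m ≠ 0)
  have hMc : (M - 1) + 1 = M := tsub_add_cancel_of_le hM1
  have estep : step m p = S.map (fun s => s - 1) := rfl
  have ha : (∑' s, S s * M ^ s) = A ^ m := sumIID_A p M m
  have hb : (M - 1) * b = M * A ^ m := by
    rw [hbdef, sumIID_B p M hc m, ← hAdef, ← hMdef]
  have hq : S 0 ≠ ∞ := (S.apply_lt_top 0).ne
  have hAm : A ^ m ≠ ∞ := ENNReal.pow_ne_top hf.ne
  have hA'eq : M * A' + S 0 = M * S 0 + A ^ m := by
    have h1 := shift_A S M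
    rw [← estep, ha] at h1
    exact h1
  have hB'eq : M * B' + A ^ m = b + S 0 := by
    have h1 := shift_B S M
    rw [← estep, ha] at h1
    exact h1
  have hRfin : M * S 0 + A ^ m ≠ ∞ :=
    ENNReal.add_ne_top.mpr ⟨ENNReal.mul_ne_top hMtop hq, hAm⟩
  have hMA' : M * A' ≠ ∞ := by
    intro htop
    exact hRfin (by rw [← hA'eq, htop, top_add])
  have hA'fin : A' < ∞ := by
    have h1 : A' ≤ M * A' := by
      calc A' = 1 * A' := (one_mul A').symm
        _ ≤ M * A' := mul_le_mul_left hM1 A'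
    exact lt_of_le_of_lt h1 (lt_top_iff_ne_top.mpr hMA')
  have key : M * ((M - 1) * B') + ((M - 1) * A ^ m + S 0)
      = M * A' + ((M - 1) * A ^ m + S 0) := by
    calc M * ((M - 1) * B') + ((M - 1) * A ^ m + S 0)
        = (M - 1) * (M * B' + A ^ m) + S 0 := by ring
      _ = (M - 1) * (b + S 0) + S 0 := by rw [hB'eq]
      _ = (M - 1) * b + ((M - 1) + 1) * S 0 := by ring
      _ = M * A ^ m + M * S 0 := by rw [hb, hMc]
      _ = (M * S 0 + A ^ m) + (M - 1) * A ^ m + S 0 - S 0 := by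
          rw [show (M * S 0 + A ^ m) + (M - 1) * A ^ m + S 0
              = M * S 0 + ((M - 1) + 1) * A ^ m + S 0 by ring, hMc,
            ENNReal.add_sub_cancel_right hq]
          ring
      _ = (M * A' + S 0) + (M - 1) * A ^ m + S 0 - S 0 := by rw [hA'eq]
      _ = M * A' + ((M - 1) * A ^ m + S 0) := by
          rw [show (M * A' + S 0) + (M - 1) * A ^ m + S 0
              = (M * A' + ((M - 1) * A ^ m + S 0)) + S 0 by ring,
            ENNReal.add_sub_cancel_right hq]
  have hcanc : (M - 1) * A ^ m + S 0 ≠ ∞ :=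
    ENNReal.add_ne_top.mpr ⟨ENNReal.mul_ne_top (ENNReal.sub_ne_top hMtop) hAm, hq⟩
  have key2 : M * ((M - 1) * B') = M * A' :=
    (ENNReal.add_left_inj hcanc).mp key
  exact ⟨(ENNReal.mul_right_inj hM0 hMtop).mp key2, hA'fin⟩

theorem stmt4 (m : ℕ) (hm : 2 ≤ m) (Y : ℕ → PMF ℕ)
    (hY : ∀ n, Y (n+1) = step m (Y n))
    (hcrit : ((m : ℝ≥0∞) - 1) * (∑' k, Y 0 k * ((k : ℝ≥0∞) * (m : ℝ≥0∞) ^ k))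
        = ∑' k, Y 0 k * (m : ℝ≥0∞) ^ k)
    (hfin : (∑' k, Y 0 k * (m : ℝ≥0∞) ^ k) < ∞) :
    ∀ n, ((m : ℝ≥0∞) - 1) * (∑' k, Y n k * ((k : ℝ≥0∞) * (m : ℝ≥0∞) ^ k))
        = (∑' k, Y n k * (m : ℝ≥0∞) ^ k)
      ∧ (∑' k, Y n k * (m : ℝ≥0∞) ^ k) < ∞ := by
  intro n
  induction n with
  | zero => exact ⟨hcrit, hfin⟩
  | succ n ih =>
    rw [hY n]
    exact ⟨(step_invariant m hm (Y n) ih.1 ih.2).1, (step_invariant m hm (Y n) ih.1 ih.2).2⟩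
end

section
/- In the critical regime, i.e. when (m−1)·E(Y_0 m^{Y_0}) = E(m^{Y_0}) < ∞, one has E(m^{Y_n}) ≤ m^{1/(m−1)} for all n ≥ 0. -/
open scoped ENNReal

/-- Expectation of `g` under a `PMF ℕ`. -/
noncomputable def Ex (p : PMF ℕ) (g : ℕ → ℝ≥0∞) : ℝ≥0∞ := ∑' k, p k * g k

lemma Ex_map (p : PMF ℕ) (f : ℕ → ℕ) (g : ℕ → ℝ≥0∞) :
    Ex (p.map f) g = Ex p (fun a => g (f a)) := by
  unfold Ex
  simp only [PMF.map_apply]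
  refine (tsum_congr fun b => ENNReal.tsum_mul_right.symm).trans ?_
  refine Eq.trans ENNReal.tsum_comm ?_
  refine tsum_congr fun a => ?_
  rw [tsum_eq_single (f a) (fun b hb => by simp [hb])]
  simp

lemma Ex_bind (p : PMF ℕ) (q : ℕ → PMF ℕ) (g : ℕ → ℝ≥0∞) :
    Ex (p.bind q) g = Ex p (fun a => Ex (q a) g) := by
  unfold Ex
  simp only [PMF.bind_apply]
  refine (tsum_congr fun b => ENNReal.tsum_mul_right.symm).trans ?_
  refine Eq.trans ENNReal.tsum_comm ?_
  refine tsum_congr fun a => ?_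
  rw [← ENNReal.tsum_mul_left]
  exact tsum_congr fun b => by ring

lemma Ex_pure (g : ℕ → ℝ≥0∞) : Ex (PMF.pure 0) g = g 0 := by
  unfold Ex
  rw [tsum_eq_single 0 (fun b hb => by simp [PMF.pure_apply, hb])]
  simp

lemma Ex_sumIID_succ (p : PMF ℕ) (k : ℕ) (g : ℕ → ℝ≥0∞) :
    Ex (sumIID p (k+1)) g = Ex (sumIID p k) (fun s => Ex p (fun a => g (a + s))) := by
  rw [show sumIID p (k+1) = (sumIID p k).bind (fun s => p.map (fun a => a + s)) from rfl]
  rw [Ex_bind]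
  exact Ex_congr _ fun s => Ex_map p _ g
where
  Ex_congr (p : PMF ℕ) {f g : ℕ → ℝ≥0∞} (h : ∀ s, f s = g s) : Ex p f = Ex p g :=
    tsum_congr fun s => by rw [h s]

lemma Ex_congr (p : PMF ℕ) {f g : ℕ → ℝ≥0∞} (h : ∀ s, f s = g s) : Ex p f = Ex p g :=
  tsum_congr fun s => by rw [h s]

lemma Ex_const_mul (p : PMF ℕ) (c : ℝ≥0∞) (g : ℕ → ℝ≥0∞) :
    Ex p (fun s => c * g s) = c * Ex p g := by
  unfold Ex
  rw [← ENNReal.tsum_mul_left]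
  exact tsum_congr fun s => by ring

lemma Ex_mul_right (p : PMF ℕ) (g : ℕ → ℝ≥0∞) (c : ℝ≥0∞) :
    Ex p (fun s => g s * c) = Ex p g * c := by
  unfold Ex
  rw [← ENNReal.tsum_mul_right]
  exact tsum_congr fun s => by ring

lemma Ex_add (p : PMF ℕ) (f g : ℕ → ℝ≥0∞) :
    Ex p (fun s => f s + g s) = Ex p f + Ex p g := by
  unfold Ex
  rw [← ENNReal.tsum_add]
  exact tsum_congr fun s => by ring

lemma Ex_mono (p : PMF ℕ) {f g : ℕ → ℝ≥0∞} (h : ∀ s, f s ≤ g s) : Ex p f ≤ Ex p g :=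
  Summable.tsum_le_tsum (fun s => mul_le_mul_right (h s) _) ENNReal.summable ENNReal.summable

lemma Ex_const (p : PMF ℕ) (c : ℝ≥0∞) : Ex p (fun _ => c) = c := by
  unfold Ex
  rw [ENNReal.tsum_mul_right, PMF.tsum_coe, one_mul]

/-- Generating function of the i.i.d. sum. -/
lemma Ex_sumIID_pow (p : PMF ℕ) (c : ℝ≥0∞) (k : ℕ) :
    Ex (sumIID p k) (fun s => c ^ s) = (Ex p (fun a => c ^ a)) ^ k := by
  induction k with
  | zero =>
    rw [show sumIID p 0 = PMF.pure 0 from rfl, Ex_pure]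
    simp
  | succ k ih =>
    rw [Ex_sumIID_succ]
    have h1 : ∀ s : ℕ, Ex p (fun a => c ^ (a + s)) = (Ex p fun a => c ^ a) * c ^ s := by
      intro s
      calc Ex p (fun a => c ^ (a + s))
          = Ex p (fun a => c ^ a * c ^ s) := Ex_congr p fun a => pow_add c a s
        _ = (Ex p fun a => c ^ a) * c ^ s := Ex_mul_right p _ _
    calc Ex (sumIID p k) (fun s => Ex p fun a => c ^ (a + s))
        = Ex (sumIID p k) (fun s => (Ex p fun a => c ^ a) * c ^ s) := Ex_congr _ h1
      _ = (Ex p fun a => c ^ a) * Ex (sumIID p k) (fun s => c ^ s) := Ex_const_mul _ _ _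
      _ = (Ex p fun a => c ^ a) ^ (k+1) := by rw [ih]; ring

/-- First moment of the i.i.d. sum against `M^s`. -/
lemma Ex_sumIID_H (p : PMF ℕ) (M : ℝ≥0∞) (k : ℕ) :
    Ex (sumIID p (k+1)) (fun s => (s : ℝ≥0∞) * M ^ s)
      = ((k : ℝ≥0∞)+1) * (Ex p (fun a => (a : ℝ≥0∞) * M ^ a)) * (Ex p (fun a => M ^ a)) ^ k := by
  induction k with
  | zero =>
    rw [Ex_sumIID_succ, show sumIID p 0 = PMF.pure 0 from rfl, Ex_pure]
    simp
  | succ k ih =>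
    rw [Ex_sumIID_succ]
    have key : ∀ s : ℕ, Ex p (fun a => ((a + s : ℕ) : ℝ≥0∞) * M ^ (a + s))
        = (Ex p (fun a => (a : ℝ≥0∞) * M ^ a)) * M ^ s
          + ((s : ℝ≥0∞) * M ^ s) * (Ex p (fun a => M ^ a)) := by
      intro s
      calc Ex p (fun a => ((a + s : ℕ) : ℝ≥0∞) * M ^ (a + s))
          = Ex p (fun a => ((a : ℝ≥0∞) * M ^ a) * M ^ s + ((s : ℝ≥0∞) * M ^ s) * M ^ a) :=
            Ex_congr p fun a => by push_cast; rw [pow_add]; ring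
        _ = Ex p (fun a => ((a : ℝ≥0∞) * M ^ a) * M ^ s)
              + Ex p (fun a => ((s : ℝ≥0∞) * M ^ s) * M ^ a) := Ex_add p _ _
        _ = (Ex p (fun a => (a : ℝ≥0∞) * M ^ a)) * M ^ s
              + ((s : ℝ≥0∞) * M ^ s) * (Ex p (fun a => M ^ a)) := by
            rw [Ex_mul_right p (fun a => (a : ℝ≥0∞) * M ^ a) (M ^ s),
              Ex_const_mul p ((s : ℝ≥0∞) * M ^ s) (fun a => M ^ a)]
    calc Ex (sumIID p (k+1)) (fun s => Ex p fun a => ((a + s : ℕ) : ℝ≥0∞) * M ^ (a + s))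
        = Ex (sumIID p (k+1)) (fun s => (Ex p (fun a => (a : ℝ≥0∞) * M ^ a)) * M ^ s
            + ((s : ℝ≥0∞) * M ^ s) * (Ex p (fun a => M ^ a))) := Ex_congr _ key
      _ = Ex (sumIID p (k+1)) (fun s => (Ex p (fun a => (a : ℝ≥0∞) * M ^ a)) * M ^ s)
            + Ex (sumIID p (k+1)) (fun s => ((s : ℝ≥0∞) * M ^ s) * (Ex p (fun a => M ^ a))) :=
          Ex_add _ _ _
      _ = (Ex p (fun a => (a : ℝ≥0∞) * M ^ a)) * (Ex p (fun a => M ^ a)) ^ (k+1)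
            + (((k : ℝ≥0∞)+1) * (Ex p (fun a => (a : ℝ≥0∞) * M ^ a)) * (Ex p (fun a => M ^ a)) ^ k)
              * (Ex p (fun a => M ^ a)) := by
          rw [Ex_const_mul _ _ (fun s => M ^ s), Ex_sumIID_pow,
            Ex_mul_right _ (fun s => (s : ℝ≥0∞) * M ^ s) _, ih]
      _ = (((k+1 : ℕ) : ℝ≥0∞)+1) * (Ex p (fun a => (a : ℝ≥0∞) * M ^ a))
            * (Ex p (fun a => M ^ a)) ^ (k+1) := by
          push_cast
          ring

lemma Ex_zero_pow (p : PMF ℕ) : Ex p (fun a => (0 : ℝ≥0∞) ^ a) = p 0 := by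
  unfold Ex
  rw [tsum_eq_single 0 (fun b hb => by simp [zero_pow hb])]
  simp

/-- First moment identity for one step of the recursion. -/
lemma step_G (m : ℕ) (hm : 2 ≤ m) (p : PMF ℕ) :
    (m : ℝ≥0∞) * Ex (step m p) (fun k => (m : ℝ≥0∞) ^ k)
      = (Ex p (fun a => (m : ℝ≥0∞) ^ a)) ^ m + ((m : ℝ≥0∞) - 1) * (p 0) ^ m := by
  have hM1 : (1:ℝ≥0∞) ≤ (m : ℝ≥0∞) := by exact_mod_cast Nat.one_le_cast.mpr (by omega)
  unfold step
  rw [Ex_map, ← Ex_const_mul]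
  have key : ∀ s : ℕ, (m : ℝ≥0∞) * (m : ℝ≥0∞) ^ (s - 1)
      = (m : ℝ≥0∞) ^ s + ((m : ℝ≥0∞) - 1) * (0:ℝ≥0∞) ^ s := by
    intro s
    cases s with
    | zero =>
      simp only [Nat.zero_sub, pow_zero, mul_one]
      exact (add_tsub_cancel_of_le hM1).symm
    | succ n =>
      rw [zero_pow (Nat.succ_ne_zero n), mul_zero, add_zero, Nat.succ_sub_one, pow_succ]
      ring
  rw [Ex_congr _ key, Ex_add, Ex_sumIID_pow, Ex_const_mul _ _ (fun s => (0:ℝ≥0∞) ^ s),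
    Ex_sumIID_pow, Ex_zero_pow]

/-- Second moment identity for one step of the recursion. -/
lemma step_H (m : ℕ) (hm : 2 ≤ m) (p : PMF ℕ) :
    (m : ℝ≥0∞) * Ex (step m p) (fun k => (k : ℝ≥0∞) * (m : ℝ≥0∞) ^ k)
        + (Ex p (fun a => (m : ℝ≥0∞) ^ a)) ^ m
      = (m : ℝ≥0∞) * Ex p (fun a => (a : ℝ≥0∞) * (m : ℝ≥0∞) ^ a)
          * (Ex p (fun a => (m : ℝ≥0∞) ^ a)) ^ (m - 1) + (p 0) ^ m := by
  set M : ℝ≥0∞ := (m : ℝ≥0∞) with hM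
  have hA : M * Ex (step m p) (fun k => (k : ℝ≥0∞) * M ^ k)
      = Ex (sumIID p m) (fun s => ((s - 1 : ℕ) : ℝ≥0∞) * M ^ s) := by
    unfold step
    rw [Ex_map, ← Ex_const_mul]
    refine Ex_congr _ fun s => ?_
    cases s with
    | zero => simp
    | succ n => rw [Nat.succ_sub_one, pow_succ]; ring
  have hGm : Ex (sumIID p m) (fun s => M ^ s) = (Ex p (fun a => M ^ a)) ^ m :=
    Ex_sumIID_pow p M m
  have hz : Ex (sumIID p m) (fun s => (0:ℝ≥0∞) ^ s) = (p 0) ^ m := by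
    rw [Ex_sumIID_pow, Ex_zero_pow]
  have hHs : Ex (sumIID p m) (fun s => (s : ℝ≥0∞) * M ^ s)
      = M * Ex p (fun a => (a : ℝ≥0∞) * M ^ a) * (Ex p (fun a => M ^ a)) ^ (m - 1) := by
    obtain ⟨j, rfl⟩ : ∃ j, m = j + 1 := ⟨m - 1, by omega⟩
    rw [Ex_sumIID_H]
    simp only [Nat.add_sub_cancel, hM]
    push_cast
    ring
  have key2 : ∀ s : ℕ, ((s - 1 : ℕ) : ℝ≥0∞) * M ^ s + M ^ s
      = (s : ℝ≥0∞) * M ^ s + (0:ℝ≥0∞) ^ s := by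
    intro s
    cases s with
    | zero => simp
    | succ n =>
      rw [zero_pow (Nat.succ_ne_zero n), add_zero, Nat.succ_sub_one]
      push_cast
      ring
  calc M * Ex (step m p) (fun k => (k : ℝ≥0∞) * M ^ k) + (Ex p (fun a => M ^ a)) ^ m
      = Ex (sumIID p m) (fun s => ((s - 1 : ℕ) : ℝ≥0∞) * M ^ s)
          + Ex (sumIID p m) (fun s => M ^ s) := by rw [hA, hGm]
    _ = Ex (sumIID p m) (fun s => ((s - 1 : ℕ) : ℝ≥0∞) * M ^ s + M ^ s) := (Ex_add _ _ _).symm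
    _ = Ex (sumIID p m) (fun s => (s : ℝ≥0∞) * M ^ s + (0:ℝ≥0∞) ^ s) := Ex_congr _ key2
    _ = Ex (sumIID p m) (fun s => (s : ℝ≥0∞) * M ^ s)
          + Ex (sumIID p m) (fun s => (0:ℝ≥0∞) ^ s) := Ex_add _ _ _
    _ = M * Ex p (fun a => (a : ℝ≥0∞) * M ^ a) * (Ex p (fun a => M ^ a)) ^ (m - 1)
          + (p 0) ^ m := by rw [hHs, hz]

/-- The critical relation propagates through one step. -/
lemma invariant_step (m : ℕ) (hm : 2 ≤ m) (p : PMF ℕ)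
    (hc : ((m : ℝ≥0∞) - 1) * Ex p (fun a => (a : ℝ≥0∞) * (m : ℝ≥0∞) ^ a)
        = Ex p (fun a => (m : ℝ≥0∞) ^ a))
    (hf : Ex p (fun a => (m : ℝ≥0∞) ^ a) ≠ ∞) :
    ((m : ℝ≥0∞) - 1) * Ex (step m p) (fun a => (a : ℝ≥0∞) * (m : ℝ≥0∞) ^ a)
        = Ex (step m p) (fun a => (m : ℝ≥0∞) ^ a)
      ∧ Ex (step m p) (fun a => (m : ℝ≥0∞) ^ a) ≠ ∞ := by
  have hMne : (m : ℝ≥0∞) ≠ 0 := Nat.cast_ne_zero.mpr (by omega)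
  have hMnt : (m : ℝ≥0∞) ≠ ∞ := ENNReal.natCast_ne_top m
  have hM1 : (1:ℝ≥0∞) ≤ (m : ℝ≥0∞) := by exact_mod_cast Nat.one_le_cast.mpr (by omega)
  set M : ℝ≥0∞ := (m : ℝ≥0∞) with hM
  set G := Ex p (fun a => M ^ a) with hG
  set H := Ex p (fun a => (a : ℝ≥0∞) * M ^ a) with hH
  set G' := Ex (step m p) (fun a => M ^ a) with hG'
  set H' := Ex (step m p) (fun a => (a : ℝ≥0∞) * M ^ a) with hH'
  set q := p 0 with hq
  have hGm : G ^ m ≠ ∞ := ENNReal.pow_ne_top hf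
  have hqt : q ≠ ∞ := (lt_of_le_of_lt (PMF.coe_le_one p 0) ENNReal.one_lt_top).ne
  have e1 : M * G' = G ^ m + (M - 1) * q ^ m := step_G m hm p
  have e2 : M * H' + G ^ m = M * H * G ^ (m - 1) + q ^ m := step_H m hm p
  -- G' is finite
  have hG'fin : G' ≠ ∞ := by
    intro h
    rw [h, ENNReal.mul_top hMne] at e1
    exact (ENNReal.add_ne_top.mpr ⟨hGm,
      ENNReal.mul_ne_top (ENNReal.sub_ne_top hMnt) (ENNReal.pow_ne_top hqt)⟩) e1.symm
  refine ⟨?_, hG'fin⟩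
  have hGpow : G * G ^ (m - 1) = G ^ m := by
    rw [← pow_succ']
    congr 1
    omega
  have hMsplit : M * G ^ m = G ^ m + (M - 1) * G ^ m := by
    calc M * G ^ m = (1 + (M - 1)) * G ^ m := by rw [add_tsub_cancel_of_le hM1]
      _ = G ^ m + (M - 1) * G ^ m := by ring
  have e3 : (M - 1) * (M * H') + (M - 1) * G ^ m = M * G ^ m + (M - 1) * q ^ m := by
    have h := congrArg (fun x => (M - 1) * x) e2
    simp only [mul_add] at h
    rw [h, show (M - 1) * (M * H * G ^ (m - 1)) = M * ((M - 1) * H) * G ^ (m - 1) by ring, hc,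
      show M * G * G ^ (m - 1) = M * (G * G ^ (m - 1)) by ring, hGpow]
  have e4 : M * G' + (M - 1) * G ^ m = M * G ^ m + (M - 1) * q ^ m := by
    rw [e1, hMsplit]
    ring
  have e5 : (M - 1) * (M * H') + (M - 1) * G ^ m = M * G' + (M - 1) * G ^ m := by rw [e3, e4]
  have hcancel : (M - 1) * G ^ m ≠ ∞ := ENNReal.mul_ne_top (ENNReal.sub_ne_top hMnt) hGm
  have e6 : (M - 1) * (M * H') = M * G' := WithTop.add_right_cancel hcancel e5
  have e7 : M * ((M - 1) * H') = M * G' := by rw [← e6]; ring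
  exact (ENNReal.mul_right_inj hMne hMnt).mp e7

/-- The key pointwise inequality, real version, for `k ≥ 1`. -/
lemma pointwise_real (r : ℝ) (hr : 2 ≤ r) (k : ℕ) (hk : 1 ≤ k) :
    r ^ k ≤ r ^ ((1:ℝ)/(r-1)) + Real.log r / (r-1) * ((r-1) * k - 1) * r ^ k := by
  have hr0 : 0 < r := by linarith
  have hr1 : 0 < r - 1 := by linarith
  set t : ℝ := Real.log r / (r - 1) with ht
  set u : ℝ := k * Real.log r - t with hu
  have htu : t * ((r-1) * k - 1) = u := by
    rw [hu, ht]; field_simp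
  have hc : r ^ ((1:ℝ)/(r-1)) = Real.exp t := by
    rw [Real.rpow_def_of_pos hr0, ht]; ring_nf
  have hrk : (r:ℝ) ^ k = Real.exp u * Real.exp t := by
    rw [← Real.exp_add, hu, show k * Real.log r - t + t = k * Real.log r by ring,
      Real.exp_nat_mul, Real.exp_log hr0]
  have key : (1 - u) * Real.exp u ≤ 1 := by
    have h1 : 1 - u ≤ Real.exp (-u) := by
      have := Real.add_one_le_exp (-u); linarith
    calc (1 - u) * Real.exp u ≤ Real.exp (-u) * Real.exp u :=
          mul_le_mul_of_nonneg_right h1 (Real.exp_pos u).le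
      _ = 1 := by rw [← Real.exp_add]; simp
  rw [htu, hc, hrk]
  nlinarith [Real.exp_pos t, Real.exp_pos u]

/-- Critical relation plus finiteness implies the bound `G ≤ m^{1/(m-1)}`. -/
lemma crit_bound (m : ℕ) (hm : 2 ≤ m) (p : PMF ℕ)
    (hc : ((m : ℝ≥0∞) - 1) * Ex p (fun a => (a : ℝ≥0∞) * (m : ℝ≥0∞) ^ a)
        = Ex p (fun a => (m : ℝ≥0∞) ^ a))
    (hf : Ex p (fun a => (m : ℝ≥0∞) ^ a) ≠ ∞) :
    Ex p (fun a => (m : ℝ≥0∞) ^ a)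
      ≤ ENNReal.ofReal ((m : ℝ) ^ ((1 : ℝ) / ((m : ℝ) - 1))) := by
  have hMnt : (m : ℝ≥0∞) ≠ ∞ := ENNReal.natCast_ne_top m
  set M : ℝ≥0∞ := (m : ℝ≥0∞) with hM
  set G := Ex p (fun a => M ^ a) with hG
  set H := Ex p (fun a => (a : ℝ≥0∞) * M ^ a) with hH
  set q := p 0 with hq
  set r : ℝ := (m : ℝ) with hr
  have hr2 : 2 ≤ r := by rw [hr]; exact_mod_cast hm
  have hr1 : 0 < r - 1 := by linarith
  have hlog : 0 < Real.log r := Real.log_pos (by linarith)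
  set t : ℝ := Real.log r / (r - 1) with ht
  have htpos : 0 < t := div_pos hlog hr1
  set C : ℝ≥0∞ := ENNReal.ofReal (r ^ ((1:ℝ)/(r-1))) with hC
  set T : ℝ≥0∞ := ENNReal.ofReal t with hT
  have hMone : (1:ℝ≥0∞) ≤ M - 1 := by
    have h2 : (2 : ℝ≥0∞) ≤ M := by rw [hM]; exact_mod_cast hm
    exact ENNReal.le_sub_of_add_le_left ENNReal.one_ne_top (by rw [one_add_one_eq_two]; exact h2)
  -- the auxiliary sum Σ := E[((M-1)k − 1)·M^k] equals q
  set Sg := Ex p (fun k => (((M - 1) * k) - 1) * M ^ k) with hSg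
  have hSq : Sg + G = G + q := by
    have key : ∀ k : ℕ, (((M - 1) * k) - 1) * M ^ k + M ^ k
        = (M - 1) * ((k:ℝ≥0∞) * M ^ k) + (0:ℝ≥0∞) ^ k := by
      intro k
      cases k with
      | zero => simp [zero_tsub]
      | succ n =>
        rw [zero_pow (Nat.succ_ne_zero n), add_zero]
        have h1 : (1:ℝ≥0∞) ≤ (M - 1) * ((n+1 : ℕ):ℝ≥0∞) := by
          calc (1:ℝ≥0∞) = 1 * 1 := by norm_num
            _ ≤ (M - 1) * ((n+1 : ℕ):ℝ≥0∞) :=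
                mul_le_mul' hMone (by exact_mod_cast Nat.succ_le_succ (Nat.zero_le n))
        calc ((M - 1) * ((n+1 : ℕ):ℝ≥0∞) - 1) * M ^ (n+1) + M ^ (n+1)
            = ((M - 1) * ((n+1 : ℕ):ℝ≥0∞) - 1 + 1) * M ^ (n+1) := by ring
          _ = ((M - 1) * ((n+1 : ℕ):ℝ≥0∞)) * M ^ (n+1) := by rw [tsub_add_cancel_of_le h1]
          _ = (M - 1) * (((n+1 : ℕ):ℝ≥0∞) * M ^ (n+1)) := by ring
    calc Sg + G = Ex p (fun k => (((M - 1) * k) - 1) * M ^ k + M ^ k) := (Ex_add p _ _).symm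
      _ = Ex p (fun k => (M - 1) * ((k:ℝ≥0∞) * M ^ k) + (0:ℝ≥0∞) ^ k) := Ex_congr p key
      _ = (M - 1) * H + q := by
          rw [Ex_add, Ex_const_mul p (M-1) (fun k => (k:ℝ≥0∞) * M ^ k), Ex_zero_pow, ← hH, ← hq]
      _ = G + q := by rw [hc]
  have hSigma : Sg = q :=
    WithTop.add_right_cancel hf (by rw [hSq, add_comm G q] : Sg + G = q + G)
  -- pointwise inequality in ℝ≥0∞
  have hpoint : ∀ k : ℕ, M ^ k + T * (0:ℝ≥0∞) ^ k
      ≤ C + T * ((((M - 1) * k) - 1) * M ^ k) := by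
    intro k
    cases k with
    | zero =>
      simp only [Nat.cast_zero, mul_zero, zero_tsub, zero_mul, pow_zero, mul_one, add_zero]
      have h1T : (1:ℝ≥0∞) + T = ENNReal.ofReal (1 + t) := by
        rw [ENNReal.ofReal_add (by norm_num) htpos.le, ENNReal.ofReal_one, hT]
      rw [h1T, hC]
      apply ENNReal.ofReal_le_ofReal
      have hexp := Real.add_one_le_exp t
      have hc' : r ^ ((1:ℝ)/(r-1)) = Real.exp t := by
        rw [Real.rpow_def_of_pos (by linarith), ht]; ring_nf
      rw [hc']
      linarith
    | succ n =>
      rw [zero_pow (Nat.succ_ne_zero n), mul_zero, add_zero]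
      have hMof : M = ENNReal.ofReal r := by
        rw [hM, hr, ENNReal.ofReal_natCast]
      have hMk : M ^ (n+1) = ENNReal.ofReal (r ^ (n+1)) := by
        rw [hMof, ENNReal.ofReal_pow (by linarith)]
      have hM1of : M - 1 = ENNReal.ofReal (r - 1) := by
        rw [hMof, ← ENNReal.ofReal_one, ← ENNReal.ofReal_sub _ (by norm_num)]
      have hcast : (((n+1 : ℕ)) : ℝ≥0∞) = ENNReal.ofReal ((n:ℝ)+1) := by
        rw [← ENNReal.ofReal_natCast (n+1)]
        congr 1
        push_cast
        ring
      have hterm : ((M - 1) * ((n+1 : ℕ):ℝ≥0∞)) - 1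
          = ENNReal.ofReal ((r - 1) * ((n:ℝ)+1) - 1) := by
        rw [hM1of, hcast, ← ENNReal.ofReal_mul (by linarith),
          ENNReal.ofReal_sub _ (by norm_num : (0:ℝ) ≤ 1), ENNReal.ofReal_one]
      have h1 : 0 ≤ (r-1) * ((n:ℝ)+1) - 1 := by nlinarith [Nat.cast_nonneg (α := ℝ) n]
      calc M ^ (n+1) = ENNReal.ofReal (r ^ (n+1)) := hMk
        _ ≤ ENNReal.ofReal (r ^ ((1:ℝ)/(r-1)) + t * ((r-1) * ((n:ℝ)+1) - 1) * r ^ (n+1)) := by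
            apply ENNReal.ofReal_le_ofReal
            have hpw := pointwise_real r hr2 (n+1) (by omega)
            rw [ht]
            push_cast at hpw ⊢
            linarith
        _ = C + T * (((((M - 1) * ((n+1 : ℕ):ℝ≥0∞))) - 1) * M ^ (n+1)) := by
            rw [ENNReal.ofReal_add (Real.rpow_nonneg (by linarith) _) (by positivity),
              ENNReal.ofReal_mul (by positivity), ENNReal.ofReal_mul htpos.le,
              hterm, hMk, hC, hT, mul_assoc]
  -- sum the pointwise inequality
  have hsum : G + T * q ≤ C + T * Sg := by
    calc G + T * q
        = Ex p (fun k => M ^ k) + T * Ex p (fun k => (0:ℝ≥0∞) ^ k) := by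
          rw [Ex_zero_pow, ← hG, ← hq]
      _ = Ex p (fun k => M ^ k + T * (0:ℝ≥0∞) ^ k) := by
          rw [Ex_add, Ex_const_mul p T (fun k => (0:ℝ≥0∞) ^ k)]
      _ ≤ Ex p (fun k => C + T * ((((M - 1) * k) - 1) * M ^ k)) := Ex_mono p hpoint
      _ = C + T * Sg := by
          rw [Ex_add, Ex_const, Ex_const_mul p T (fun k => (((M - 1) * k) - 1) * M ^ k), ← hSg]
  rw [hSigma] at hsum
  have hTq : T * q ≠ ∞ := ENNReal.mul_ne_top ENNReal.ofReal_ne_top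
    (lt_of_le_of_lt (PMF.coe_le_one p 0) ENNReal.one_lt_top).ne
  have hfinal := ENNReal.le_of_add_le_add_right hTq hsum
  rw [hC, hr] at hfinal
  exact hfinal

theorem stmt5 (m : ℕ) (hm : 2 ≤ m) (Y : ℕ → PMF ℕ)
    (hY : ∀ n, Y (n+1) = step m (Y n))
    (hcrit : ((m : ℝ≥0∞) - 1) * (∑' k, Y 0 k * ((k : ℝ≥0∞) * (m : ℝ≥0∞) ^ k))
        = ∑' k, Y 0 k * (m : ℝ≥0∞) ^ k)
    (hfin : (∑' k, Y 0 k * (m : ℝ≥0∞) ^ k) < ∞) :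
    ∀ n, (∑' k, Y n k * (m : ℝ≥0∞) ^ k)
        ≤ ENNReal.ofReal ((m : ℝ) ^ ((1 : ℝ) / ((m : ℝ) - 1))) := by
  have inv : ∀ n, ((m : ℝ≥0∞) - 1) * Ex (Y n) (fun a => (a : ℝ≥0∞) * (m : ℝ≥0∞) ^ a)
        = Ex (Y n) (fun a => (m : ℝ≥0∞) ^ a)
      ∧ Ex (Y n) (fun a => (m : ℝ≥0∞) ^ a) ≠ ∞ := by
    intro n
    induction n with
    | zero => exact ⟨hcrit, hfin.ne⟩
    | succ n ih =>
      rw [hY n]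
      exact invariant_step m hm (Y n) ih.1 ih.2
  intro n
  exact crit_bound m hm (Y n) (inv n).1 (inv n).2
end

section
/- Assume E(X_0 m^{X_0}) < ∞. For every n ≥ 0, the function s ↦ ((m−1)·s·H_n'(s) − H_n(s))/s is non-decreasing on (0, m), where H_n(s) = E(s^{X_n}); this follows from the pointwise identity (m−1)s²H_n''(s) + H_n(s) − sH_n'(s) ≥ E[(X_n−1)² s^{X_n}] ≥ 0. -/
open scoped ENNReal

/-- Generating function `H(s) = E(s^X)`. -/
noncomputable def genFun (p : PMF ℕ) (s : ℝ) : ℝ := ∑' k, (p k).toReal * s ^ k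

/-- First derivative series of `genFun`. -/
noncomputable def gfD1 (p : PMF ℕ) (x : ℝ) : ℝ := ∑' k, (p k).toReal * ((k : ℝ) * x ^ (k - 1))

/-- Second derivative series of `genFun`. -/
noncomputable def gfD2 (p : PMF ℕ) (x : ℝ) : ℝ :=
  ∑' k, (p k).toReal * ((k : ℝ) * (((k - 1 : ℕ) : ℝ) * x ^ (k - 2)))

lemma hsa_of (p : PMF ℕ) : Summable fun k => (p k).toReal :=
  ENNReal.summable_toReal (by rw [p.tsum_coe]; exact ENNReal.one_ne_top)

lemma ha_of (p : PMF ℕ) : ∀ k, 0 ≤ (p k).toReal := fun _ => ENNReal.toReal_nonneg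

lemma pow_bound_aux {y M : ℝ} (hy : |y| ≤ M) (hM : 1 ≤ M) {j k : ℕ} (hjk : j ≤ k) :
    |y| ^ j ≤ M ^ k :=
  le_trans (pow_le_pow_left₀ (abs_nonneg y) hy j) (pow_le_pow_right₀ hM hjk)

lemma Mk_aux {M : ℝ} (hM : 1 ≤ M) : ∀ k : ℕ, M ^ k ≤ (k:ℝ) * M ^ k + 1 := by
  intro k
  cases k with
  | zero => simp
  | succ n =>
    have h1 : (0:ℝ) ≤ M ^ (n+1) := by positivity
    have h2 : (0:ℝ) ≤ (n:ℝ) := Nat.cast_nonneg n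
    push_cast
    nlinarith

lemma aux_geom {r M : ℝ} (hr : 0 ≤ r) (hrM : r < M) (hM : 0 < M) :
    ∃ C : ℝ, 0 ≤ C ∧ ∀ k : ℕ, (k : ℝ) * r ^ k ≤ C * M ^ k := by
  set q : ℝ := r / M with hq
  have hq0 : 0 ≤ q := div_nonneg hr hM.le
  have hq1 : q < 1 := (div_lt_one hM).2 hrM
  have hsum : Summable (fun k : ℕ => (k : ℝ) * q ^ k) := by
    have := summable_pow_mul_geometric_of_norm_lt_one (R := ℝ) 1 (r := q)
      (by rwa [Real.norm_eq_abs, abs_of_nonneg hq0])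
    simpa using this
  refine ⟨∑' k : ℕ, (k : ℝ) * q ^ k, tsum_nonneg fun k => by positivity, fun k => ?_⟩
  have h1 : (k : ℝ) * q ^ k ≤ ∑' k : ℕ, (k : ℝ) * q ^ k :=
    Summable.le_tsum hsum k fun j _ => by positivity
  have h2 : r ^ k = q ^ k * M ^ k := by
    rw [← mul_pow, hq, div_mul_cancel₀ _ hM.ne']
  calc (k : ℝ) * r ^ k = ((k : ℝ) * q ^ k) * M ^ k := by rw [h2]; ring
    _ ≤ (∑' k : ℕ, (k : ℝ) * q ^ k) * M ^ k := mul_le_mul_of_nonneg_right h1 (by positivity)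

lemma aux_summable {p : PMF ℕ} {M : ℝ}
    (hsum : Summable fun k => (p k).toReal * ((k : ℝ) * M ^ k)) {c : ℕ → ℝ} {C : ℝ}
    (hc : ∀ k, |c k| ≤ C * ((k : ℝ) * M ^ k) + C) :
    Summable fun k => (p k).toReal * c k := by
  refine Summable.of_norm_bounded
    (g := fun k => C * ((p k).toReal * ((k : ℝ) * M ^ k)) + C * (p k).toReal)
    (((hsum.mul_left C).add ((hsa_of p).mul_left C))) fun k => ?_
  have h : ‖(p k).toReal * c k‖ = (p k).toReal * |c k| := by
    rw [norm_mul, Real.norm_eq_abs, Real.norm_eq_abs, abs_of_nonneg (ha_of p k)]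
  rw [h]
  calc (p k).toReal * |c k| ≤ (p k).toReal * (C * ((k : ℝ) * M ^ k) + C) :=
        mul_le_mul_of_nonneg_left (hc k) (ha_of p k)
    _ = C * ((p k).toReal * ((k : ℝ) * M ^ k)) + C * (p k).toReal := by ring

lemma genFun_summable {p : PMF ℕ} {M : ℝ} (hM : 1 ≤ M)
    (hsum : Summable fun k => (p k).toReal * ((k : ℝ) * M ^ k))
    {y : ℝ} (hy : |y| ≤ M) : Summable fun k => (p k).toReal * y ^ k := by
  refine aux_summable hsum (C := 1) fun k => ?_
  rw [abs_pow]
  calc |y| ^ k ≤ M ^ k := pow_bound_aux hy hM le_rfl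
    _ ≤ (k:ℝ) * M ^ k + 1 := Mk_aux hM k
    _ = 1 * ((k:ℝ) * M ^ k) + 1 := by ring

lemma d1_summable {p : PMF ℕ} {M : ℝ} (hM : 1 ≤ M)
    (hsum : Summable fun k => (p k).toReal * ((k : ℝ) * M ^ k))
    {y : ℝ} (hy : |y| ≤ M) :
    Summable fun k => (p k).toReal * ((k : ℝ) * y ^ (k - 1)) := by
  refine aux_summable hsum (C := 1) fun k => ?_
  have h0 : (0:ℝ) ≤ (k:ℝ) := Nat.cast_nonneg k
  have h : |(k:ℝ) * y ^ (k-1)| = (k:ℝ) * |y| ^ (k-1) := by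
    rw [abs_mul, abs_pow, abs_of_nonneg h0]
  rw [h]
  have h1 : |y| ^ (k-1) ≤ M ^ k := pow_bound_aux hy hM (Nat.sub_le k 1)
  have h2 : (0:ℝ) ≤ M ^ k := by positivity
  nlinarith

lemma d1_summable_at_zero (p : PMF ℕ) :
    Summable fun k => (p k).toReal * ((k : ℝ) * (0:ℝ) ^ (k - 1)) := by
  refine Summable.of_norm_bounded (g := fun k => (p k).toReal) (hsa_of p) fun k => ?_
  match k with
  | 0 => simp
  | 1 => simp [abs_of_nonneg (ha_of p 1)]
  | (j+2) => simp [zero_pow (Nat.succ_ne_zero j), ha_of p]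

lemma d2_coeff_bound {M r C : ℝ} (hM : 1 ≤ M) (hr0 : 0 ≤ r) (hrM : r < M) (hC0 : 0 ≤ C)
    (hC : ∀ k : ℕ, (k : ℝ) * r ^ k ≤ C * M ^ k) {y : ℝ} (hy : |y| ≤ r) (k : ℕ) :
    ((k-1:ℕ):ℝ) * |y| ^ (k-2) ≤ (C+1) * M ^ k := by
  have hyk : |y| ^ (k-2) ≤ r ^ (k-2) := pow_le_pow_left₀ (abs_nonneg y) hy _
  have hrk : r ^ (k-2) ≤ M ^ (k-2) := pow_le_pow_left₀ hr0 hrM.le _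
  have hMk : M ^ (k-2) ≤ M ^ k := pow_le_pow_right₀ hM (Nat.sub_le k 2)
  have hk1 : ((k-1:ℕ):ℝ) ≤ ((k-2:ℕ):ℝ) + 1 := by
    have : (k-1:ℕ) ≤ (k-2:ℕ) + 1 := by omega
    exact_mod_cast this
  calc ((k-1:ℕ):ℝ) * |y| ^ (k-2) ≤ (((k-2:ℕ):ℝ) + 1) * r ^ (k-2) :=
        mul_le_mul hk1 hyk (by positivity) (by positivity)
    _ = ((k-2:ℕ):ℝ) * r ^ (k-2) + r ^ (k-2) := by ring
    _ ≤ C * M ^ (k-2) + M ^ (k-2) := add_le_add (hC (k-2)) hrk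
    _ = (C+1) * M ^ (k-2) := by ring
    _ ≤ (C+1) * M ^ k := mul_le_mul_of_nonneg_left hMk (by positivity)

lemma d2_summable {p : PMF ℕ} {M : ℝ} (hM : 1 ≤ M)
    (hsum : Summable fun k => (p k).toReal * ((k : ℝ) * M ^ k))
    {y : ℝ} (hy : |y| < M) :
    Summable fun k => (p k).toReal * ((k : ℝ) * (((k-1:ℕ):ℝ) * y ^ (k - 2))) := by
  have hM0 : (0:ℝ) < M := lt_of_lt_of_le one_pos hM
  set r : ℝ := (|y| + M) / 2 with hr_def
  have hr0 : 0 < r := by positivity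
  have hyr : |y| ≤ r := by rw [hr_def]; linarith
  have hrM : r < M := by rw [hr_def]; linarith
  obtain ⟨C, hC0, hC⟩ := aux_geom hr0.le hrM hM0
  refine aux_summable hsum (C := C+1) fun k => ?_
  have h0 : (0:ℝ) ≤ (k:ℝ) := Nat.cast_nonneg k
  have h : |(k:ℝ) * (((k-1:ℕ):ℝ) * y ^ (k-2))| = (k:ℝ) * (((k-1:ℕ):ℝ) * |y| ^ (k-2)) := by
    rw [abs_mul, abs_mul, abs_pow, abs_of_nonneg h0,
      abs_of_nonneg (by positivity : (0:ℝ) ≤ ((k-1:ℕ):ℝ))]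
  rw [h]
  have key := d2_coeff_bound hM hr0.le hrM hC0 hC hyr k
  have h2 : (0:ℝ) ≤ M ^ k := by positivity
  nlinarith [mul_le_mul_of_nonneg_left key h0]

lemma hasDerivAt_genFun {p : PMF ℕ} {M : ℝ} (hM : 1 ≤ M)
    (hsum : Summable fun k => (p k).toReal * ((k : ℝ) * M ^ k))
    {x : ℝ} (hx : x ∈ Set.Ioo (-M) M) :
    HasDerivAt (genFun p) (gfD1 p x) x := by
  have hM0 : (0:ℝ) < M := lt_of_lt_of_le one_pos hM
  refine hasDerivAt_tsum_of_isPreconnected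
    (g := fun k z => (p k).toReal * z ^ k)
    (g' := fun k y => (p k).toReal * ((k:ℝ) * y ^ (k-1)))
    (hsum) isOpen_Ioo (convex_Ioo (-M) M).isPreconnected
    (fun k y _ => (hasDerivAt_pow k y).const_mul ((p k).toReal))
    (fun k y hy => ?_) (Set.mem_Ioo.2 ⟨neg_lt_zero.2 hM0, hM0⟩)
    (genFun_summable hM hsum (by rw [abs_zero]; linarith)) hx
  have hyM : |y| ≤ M := by rw [abs_le]; exact ⟨hy.1.le, hy.2.le⟩
  have h1 : |y| ^ (k - 1) ≤ M ^ k := pow_bound_aux hyM hM (Nat.sub_le k 1)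
  have h2 : ‖(p k).toReal * ((k:ℝ) * y ^ (k-1))‖
      = (p k).toReal * ((k:ℝ) * |y| ^ (k-1)) := by
    rw [norm_mul, norm_mul, Real.norm_eq_abs, Real.norm_eq_abs, Real.norm_eq_abs,
      abs_of_nonneg (ha_of p k), abs_of_nonneg (by positivity : (0:ℝ) ≤ (k:ℝ)), abs_pow]
  rw [h2]
  exact mul_le_mul_of_nonneg_left
    (mul_le_mul_of_nonneg_left h1 (by positivity)) (ha_of p k)

lemma pow_deriv2 (k : ℕ) (y : ℝ) :
    HasDerivAt (fun z : ℝ => (k:ℝ) * z^(k-1)) ((k:ℝ) * (((k-1:ℕ):ℝ) * y^(k-2))) y := by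
  have h := (hasDerivAt_pow (k-1) y).const_mul ((k:ℝ))
  simpa [Nat.sub_sub] using h

lemma hasDerivAt_gfD1 {p : PMF ℕ} {M : ℝ} (hM : 1 ≤ M)
    (hsum : Summable fun k => (p k).toReal * ((k : ℝ) * M ^ k))
    {x : ℝ} (hx : x ∈ Set.Ioo (-M) M) :
    HasDerivAt (gfD1 p) (gfD2 p x) x := by
  have hM0 : (0:ℝ) < M := lt_of_lt_of_le one_pos hM
  have hxM : |x| < M := abs_lt.2 ⟨hx.1, hx.2⟩
  set r : ℝ := (|x| + M) / 2 with hr_def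
  have hr0 : 0 < r := by positivity
  have hxr : |x| < r := by rw [hr_def]; linarith [abs_nonneg x]
  have hrM : r < M := by rw [hr_def]; linarith
  obtain ⟨C, hC0, hC⟩ := aux_geom hr0.le hrM hM0
  refine hasDerivAt_tsum_of_isPreconnected
    (g := fun k z => (p k).toReal * ((k:ℝ) * z ^ (k-1)))
    (g' := fun k y => (p k).toReal * ((k:ℝ) * (((k-1:ℕ):ℝ) * y ^ (k-2))))
    (hsum.mul_left (C+1)) isOpen_Ioo
    (convex_Ioo (-r) r).isPreconnected
    (fun k y _ => (pow_deriv2 k y).const_mul ((p k).toReal))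
    (fun k y hy => ?_) (Set.mem_Ioo.2 ⟨neg_lt_zero.2 hr0, hr0⟩)
    (d1_summable_at_zero p) (Set.mem_Ioo.2 ⟨neg_lt_of_abs_lt hxr, lt_of_abs_lt hxr⟩)
  have hyr : |y| ≤ r := (abs_lt.2 ⟨hy.1, hy.2⟩).le
  have key := d2_coeff_bound hM hr0.le hrM hC0 hC hyr k
  have hnorm : ‖(p k).toReal * ((k:ℝ) * (((k-1:ℕ):ℝ) * y ^ (k-2)))‖
      = (p k).toReal * ((k:ℝ) * (((k-1:ℕ):ℝ) * |y| ^ (k-2))) := by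
    rw [Real.norm_eq_abs, abs_mul, abs_mul, abs_mul, abs_pow,
      abs_of_nonneg (ha_of p k), abs_of_nonneg (by positivity : (0:ℝ) ≤ (k:ℝ)),
      abs_of_nonneg (by positivity : (0:ℝ) ≤ ((k-1:ℕ):ℝ))]
  rw [hnorm]
  calc (p k).toReal * ((k:ℝ) * (((k-1:ℕ):ℝ) * |y| ^ (k-2)))
      ≤ (p k).toReal * ((k:ℝ) * ((C+1) * M ^ k)) :=
        mul_le_mul_of_nonneg_left (mul_le_mul_of_nonneg_left key (by positivity)) (ha_of p k)
    _ = (C+1) * ((p k).toReal * ((k:ℝ) * M ^ k)) := by ring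

lemma E_summable {p : PMF ℕ} {M : ℝ} (hM : 1 ≤ M)
    (hsum : Summable fun k => (p k).toReal * ((k : ℝ) * M ^ k))
    {y : ℝ} (hy0 : 0 ≤ y) (hyM : y < M) :
    Summable fun k => (p k).toReal * ((k:ℝ) - 1) ^ 2 * y ^ k := by
  have hM0 : (0:ℝ) < M := lt_of_lt_of_le one_pos hM
  obtain ⟨C, hC0, hC⟩ := aux_geom hy0 hyM hM0
  have := aux_summable (p := p) hsum (C := C+1) (c := fun k => ((k:ℝ) - 1) ^ 2 * y ^ k) ?_
  · exact this.congr fun k => by ring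
  intro k
  have h0 : (0:ℝ) ≤ (k:ℝ) := Nat.cast_nonneg k
  have h5 : (0:ℝ) ≤ y ^ k := by positivity
  have habs : |((k:ℝ) - 1) ^ 2 * y ^ k| = ((k:ℝ) - 1) ^ 2 * y ^ k :=
    abs_of_nonneg (by positivity)
  rw [habs]
  have h1 : (k:ℝ) * y ^ k ≤ C * M ^ k := hC k
  have h2 : y ^ k ≤ M ^ k := pow_le_pow_left₀ hy0 hyM.le k
  have h3 : M ^ k ≤ (k:ℝ) * M ^ k + 1 := Mk_aux hM k
  have h6 : (0:ℝ) ≤ M ^ k := by positivity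
  nlinarith [mul_le_mul_of_nonneg_left h1 h0, mul_nonneg h0 h5, mul_nonneg h0 h6]

lemma term_ineq {M s ak : ℝ} (hM : 2 ≤ M) (hs : 0 < s) (ha : 0 ≤ ak) (k : ℕ) :
    ak * ((k:ℝ) - 1) ^ 2 * s ^ k ≤
      (M - 1) * s ^ 2 * (ak * ((k:ℝ) * (((k-1:ℕ):ℝ) * s ^ (k-2)))) + ak * s ^ k
        - s * (ak * ((k:ℝ) * s ^ (k-1))) := by
  match k with
  | 0 => norm_num
  | 1 => norm_num [mul_comm]
  | (j+2) =>
    have e0 : (j+2-1 : ℕ) = j+1 := by omega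
    have e1 : s ^ (j+2) = s ^ j * (s * s) := by ring
    have e2 : s ^ (j+2-1) = s ^ j * s := by rw [e0]; ring
    have e3 : (j+2-2 : ℕ) = j := by omega
    have e4 : ((j+2-1 : ℕ) : ℝ) = (j:ℝ) + 1 := by rw [e0]; push_cast; ring
    rw [e1, e2, e3, e4]
    have hj : (0:ℝ) ≤ (j:ℝ) := Nat.cast_nonneg j
    have key : 0 ≤ (ak * s ^ j * (s * s)) * (((j:ℝ)+1) * ((j:ℝ)+2) * (M-2)) := by
      apply mul_nonneg (by positivity)
      apply mul_nonneg (by positivity)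
      linarith
    push_cast
    nlinarith [key]

theorem stmt7 (m : ℕ) (hm : 2 ≤ m) (p : PMF ℕ)
    (hfin : (∑' k, p k * ((k : ℝ≥0∞) * (m : ℝ≥0∞) ^ k)) < ∞) :
    (∀ s ∈ Set.Ioo (0 : ℝ) (m : ℝ),
      (0 : ℝ) ≤ ∑' k, (p k).toReal * ((k : ℝ) - 1) ^ 2 * s ^ k ∧
      (∑' k, (p k).toReal * ((k : ℝ) - 1) ^ 2 * s ^ k)
        ≤ ((m : ℝ) - 1) * s ^ 2 * deriv (deriv (genFun p)) s
            + genFun p s - s * deriv (genFun p) s) ∧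
    MonotoneOn
      (fun s => (((m : ℝ) - 1) * s * deriv (genFun p) s - genFun p s) / s)
      (Set.Ioo 0 (m : ℝ)) := by
  have hM2 : (2:ℝ) ≤ (m:ℝ) := by exact_mod_cast hm
  have hM1 : (1:ℝ) ≤ (m:ℝ) := by linarith
  have hM0 : (0:ℝ) < (m:ℝ) := by linarith
  have hsum : Summable fun k => (p k).toReal * ((k : ℝ) * (m:ℝ) ^ k) := by
    have h := ENNReal.summable_toReal hfin.ne
    refine h.congr fun k => ?_
    rw [ENNReal.toReal_mul, ENNReal.toReal_mul, ENNReal.toReal_pow]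
    simp
  have hmem : ∀ s ∈ Set.Ioo (0:ℝ) (m:ℝ), s ∈ Set.Ioo (-(m:ℝ)) (m:ℝ) :=
    fun s hs => ⟨by linarith [hs.1], hs.2⟩
  have hH1 : ∀ s ∈ Set.Ioo (0:ℝ) (m:ℝ), HasDerivAt (genFun p) (gfD1 p s) s :=
    fun s hs => hasDerivAt_genFun hM1 hsum (hmem s hs)
  have hDeq : ∀ s ∈ Set.Ioo (0:ℝ) (m:ℝ), deriv (genFun p) s = gfD1 p s :=
    fun s hs => (hH1 s hs).deriv
  have hH2 : ∀ s ∈ Set.Ioo (0:ℝ) (m:ℝ), HasDerivAt (deriv (genFun p)) (gfD2 p s) s := by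
    intro s hs
    refine (hasDerivAt_gfD1 hM1 hsum (hmem s hs)).congr_of_eventuallyEq ?_
    filter_upwards [Ioo_mem_nhds (show -(m:ℝ) < s by linarith [hs.1]) hs.2] with y hy
    exact (hasDerivAt_genFun hM1 hsum hy).deriv
  have hD2eq : ∀ s ∈ Set.Ioo (0:ℝ) (m:ℝ), deriv (deriv (genFun p)) s = gfD2 p s :=
    fun s hs => (hH2 s hs).deriv
  -- the key inequality in terms of gfD1/gfD2
  have part1 : ∀ s ∈ Set.Ioo (0:ℝ) (m:ℝ),
      (0 : ℝ) ≤ ∑' k, (p k).toReal * ((k : ℝ) - 1) ^ 2 * s ^ k ∧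
      (∑' k, (p k).toReal * ((k : ℝ) - 1) ^ 2 * s ^ k)
        ≤ ((m : ℝ) - 1) * s ^ 2 * gfD2 p s + genFun p s - s * gfD1 p s := by
    intro s hs
    have hs0 : 0 < s := hs.1
    have hsM : s < (m:ℝ) := hs.2
    have hsabs : |s| ≤ (m:ℝ) := by rw [abs_of_nonneg hs0.le]; linarith
    have SH : Summable fun k => (p k).toReal * s ^ k := genFun_summable hM1 hsum hsabs
    have S1 : Summable fun k => (p k).toReal * ((k:ℝ) * s ^ (k-1)) := d1_summable hM1 hsum hsabs
    have S2 : Summable fun k => (p k).toReal * ((k:ℝ) * (((k-1:ℕ):ℝ) * s ^ (k-2))) :=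
      d2_summable hM1 hsum (by rw [abs_of_nonneg hs0.le]; exact hsM)
    have SE : Summable fun k => (p k).toReal * ((k:ℝ) - 1) ^ 2 * s ^ k :=
      E_summable hM1 hsum hs0.le hsM
    constructor
    · exact tsum_nonneg fun k =>
        mul_nonneg (mul_nonneg (ha_of p k) (sq_nonneg _)) (pow_nonneg hs0.le k)
    · have hR : ((m:ℝ) - 1) * s ^ 2 * gfD2 p s + genFun p s - s * gfD1 p s
          = ∑' k, (((m:ℝ) - 1) * s ^ 2 * ((p k).toReal * ((k:ℝ) * (((k-1:ℕ):ℝ) * s ^ (k-2))))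
              + (p k).toReal * s ^ k - s * ((p k).toReal * ((k:ℝ) * s ^ (k-1)))) := by
        unfold gfD2 genFun gfD1
        rw [← tsum_mul_left (a := ((m:ℝ) - 1) * s ^ 2), ← tsum_mul_left (a := s),
          ← Summable.tsum_add (S2.mul_left _) SH, ← Summable.tsum_sub ((S2.mul_left _).add SH) (S1.mul_left s)]
      rw [hR]
      exact Summable.tsum_le_tsum (fun k => term_ineq hM2 hs0 (ha_of p k) k) SE
        (((S2.mul_left _).add SH).sub (S1.mul_left s))
  refine ⟨fun s hs => ⟨(part1 s hs).1, by
      rw [hD2eq s hs, hDeq s hs]; exact (part1 s hs).2⟩, ?_⟩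
  -- monotonicity
  have hG : ∀ x ∈ Set.Ioo (0:ℝ) (m:ℝ),
      HasDerivAt (fun s => (((m : ℝ) - 1) * s * deriv (genFun p) s - genFun p s) / s)
        ((((m:ℝ) - 1) * x ^ 2 * gfD2 p x + genFun p x - x * gfD1 p x) / x ^ 2) x := by
    intro x hx
    have h1 := hH1 x hx
    have h2 := hH2 x hx
    have hnum : HasDerivAt (fun y => ((m:ℝ) - 1) * y * deriv (genFun p) y - genFun p y)
        ((((m:ℝ) - 1) * 1) * deriv (genFun p) x + (((m:ℝ) - 1) * x) * gfD2 p x - gfD1 p x) x :=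
      (((hasDerivAt_id x).const_mul ((m:ℝ) - 1)).mul h2).sub h1
    have hdiv := hnum.div (hasDerivAt_id x) (ne_of_gt hx.1)
    convert hdiv using 1
    · rfl
    · rfl
    · rfl
    rw [hDeq x hx]
    simp only [id]
    field_simp
    ring
  refine monotoneOn_of_deriv_nonneg (convex_Ioo 0 (m:ℝ))
    (fun x hx => (hG x hx).continuousAt.continuousWithinAt)
    (fun x hx => by
      rw [interior_Ioo] at hx
      exact (hG x hx).differentiableAt.differentiableWithinAt)
    (fun x hx => ?_)
  rw [interior_Ioo] at hx
  rw [(hG x hx).deriv]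
  have h := part1 x hx
  have hnum : 0 ≤ ((m:ℝ) - 1) * x ^ 2 * gfD2 p x + genFun p x - x * gfD1 p x :=
    le_trans h.1 h.2
  positivity
end

section
/- For the recursive system, the expectations satisfy the exact identity E(X_{n+1}) = m·E(X_n) − 1 + P(X_n = 0)^m for every n ≥ 0, and consequently E(X_n) = m^n·E(X_0) − Σ_{i=0}^{n−1} m^{n−1−i}·(1 − P(X_i = 0)^m). -/
open scoped ENNReal

lemma map_exp (p : PMF ℕ) (f : ℕ → ℕ) (g : ℕ → ℝ≥0∞) :
    ∑' b, (p.map f) b * g b = ∑' a, p a * g (f a) := by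
  simp only [PMF.map_apply, ← ENNReal.tsum_mul_right]
  rw [ENNReal.tsum_comm]
  refine tsum_congr fun a => ?_
  simp only [ite_mul, zero_mul]
  rw [tsum_eq_single (f a) (fun b hb => by simp [hb])]
  simp

lemma bind_exp (p : PMF ℕ) (q : ℕ → PMF ℕ) (g : ℕ → ℝ≥0∞) :
    ∑' b, (p.bind q) b * g b = ∑' a, p a * ∑' b, q a b * g b := by
  simp only [PMF.bind_apply, ← ENNReal.tsum_mul_right]
  rw [ENNReal.tsum_comm]
  refine tsum_congr fun a => ?_
  rw [← ENNReal.tsum_mul_left]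
  simp [mul_assoc]

/-- ENNReal-valued expectation. -/
noncomputable def ennE (p : PMF ℕ) : ℝ≥0∞ := ∑' k, p k * (k : ℝ≥0∞)

lemma ennE_sumIID (p : PMF ℕ) (k : ℕ) : ennE (sumIID p k) = k * ennE p := by
  induction k with
  | zero =>
    unfold ennE sumIID
    simp only [PMF.pure_apply]
    rw [tsum_eq_single 0 (fun b hb => by simp [hb])]
    simp
  | succ k ih =>
    unfold ennE at *
    rw [sumIID, bind_exp]
    have h1 : ∀ s : ℕ, ∑' b, (p.map (fun a => a + s)) b * (b : ℝ≥0∞)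
        = (∑' a, p a * (a : ℝ≥0∞)) + s := by
      intro s
      rw [map_exp]
      push_cast
      simp_rw [mul_add]
      rw [ENNReal.tsum_add, ENNReal.tsum_mul_right, p.tsum_coe, one_mul]
    simp_rw [h1, mul_add]
    rw [ENNReal.tsum_add, ENNReal.tsum_mul_right, (sumIID p k).tsum_coe, one_mul, ih]
    push_cast
    ring

lemma sumIID_zero (p : PMF ℕ) (k : ℕ) : (sumIID p k) 0 = p 0 ^ k := by
  induction k with
  | zero => simp [sumIID]
  | succ k ih =>
    rw [sumIID, PMF.bind_apply]
    have h1 : ∀ s : ℕ, (p.map (fun a => a + s)) 0 = if s = 0 then p 0 else 0 := by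
      intro s
      rw [PMF.map_apply]
      rcases Nat.eq_zero_or_pos s with hs | hs
      · subst hs
        rw [tsum_eq_single 0 (fun b hb => by rw [if_neg (by omega)])]
        simp
      · rw [tsum_eq_single 0 (fun b hb => by rw [if_neg (by omega)])]
        rw [if_neg (by omega), if_neg (by omega)]
    simp_rw [h1]
    rw [tsum_eq_single 0 (fun b hb => by simp [hb])]
    simp [ih, pow_succ, mul_comm]

lemma ennE_step (m : ℕ) (p : PMF ℕ) :
    ennE (step m p) + 1 = m * ennE p + (p 0) ^ m := by
  unfold step ennE
  rw [map_exp]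
  have h2 : (1:ℝ≥0∞) = ∑' s, (sumIID p m) s * 1 := by
    simp [(sumIID p m).tsum_coe]
  nth_rewrite 1 [h2]
  rw [← ENNReal.tsum_add]
  have h3 : ∀ s : ℕ, (sumIID p m) s * ((s-1 : ℕ):ℝ≥0∞) + (sumIID p m) s * 1
      = (sumIID p m) s * (s:ℝ≥0∞) + (if s = 0 then (sumIID p m) s else 0) := by
    intro s
    rcases s with _ | s
    · simp
    · rw [if_neg (Nat.succ_ne_zero s), add_zero, ← mul_add, Nat.succ_sub_one]
      congr 1
      push_cast
      ring
  simp_rw [h3]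
  rw [ENNReal.tsum_add]
  have h4 : (∑' s, if s = 0 then (sumIID p m) s else 0) = (sumIID p m) 0 := by
    rw [tsum_eq_single 0 (fun b hb => by rw [if_neg hb]), if_pos rfl]
  rw [h4, sumIID_zero]
  have := ennE_sumIID p m
  unfold ennE at this
  rw [this]

theorem stmt12 (m : ℕ) (hm : 2 ≤ m) (X : ℕ → PMF ℕ)
    (hX : ∀ n, X (n+1) = step m (X n))
    (h0 : (∑' k, X 0 k * (k : ℝ≥0∞)) < ∞) :
    (∀ n, realE (X (n+1)) = m * realE (X n) - 1 + ((X n 0).toReal) ^ m) ∧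
    ∀ n, realE (X n)
      = (m : ℝ) ^ n * realE (X 0)
        - ∑ i ∈ Finset.range n, (m : ℝ) ^ (n - 1 - i) * (1 - ((X i 0).toReal) ^ m) := by
  have hpow : ∀ n, (X n 0) ^ m ≠ ∞ :=
    fun n => (pow_le_one₀ zero_le ((X n).coe_le_one 0)).trans_lt ENNReal.one_lt_top |>.ne
  have hfin : ∀ n, ennE (X n) ≠ ∞ := by
    intro n
    induction n with
    | zero => exact h0.ne
    | succ n ih =>
      have h := ennE_step m (X n)
      rw [← hX n] at h
      have hle : ennE (X (n+1)) ≤ (m : ℝ≥0∞) * ennE (X n) + (X n 0) ^ m :=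
        h ▸ le_self_add
      exact (hle.trans_lt (by
        exact ENNReal.add_lt_top.2 ⟨ENNReal.mul_lt_top (by simp) (lt_top_iff_ne_top.2 ih),
          lt_top_iff_ne_top.2 (hpow n)⟩)).ne
  have hreal : ∀ p : PMF ℕ, realE p = (ennE p).toReal := fun p => rfl
  have part1 : ∀ n, realE (X (n+1)) = m * realE (X n) - 1 + ((X n 0).toReal) ^ m := by
    intro n
    have h := ennE_step m (X n)
    rw [← hX n] at h
    have ht := congrArg ENNReal.toReal h
    rw [ENNReal.toReal_add (hfin (n+1)) (by simp), ENNReal.toReal_add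
        (ENNReal.mul_ne_top (by simp) (hfin n)) (hpow n),
      ENNReal.toReal_mul, ENNReal.toReal_pow, ENNReal.toReal_one,
      ENNReal.toReal_natCast] at ht
    rw [hreal, hreal]
    linarith
  refine ⟨part1, ?_⟩
  intro n
  induction n with
  | zero => simp
  | succ n ih =>
    rw [part1 n, ih]
    simp only [Nat.add_sub_cancel]
    have hsum : (m:ℝ) * ∑ i ∈ Finset.range n, (m:ℝ)^(n-1-i) * (1 - ((X i 0).toReal)^m)
        = ∑ i ∈ Finset.range n, (m:ℝ)^(n-i) * (1 - ((X i 0).toReal)^m) := by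
      rw [Finset.mul_sum]
      refine Finset.sum_congr rfl fun i hi => ?_
      rw [← mul_assoc, ← pow_succ']
      congr 2
      have := Finset.mem_range.1 hi
      omega
    rw [Finset.sum_range_succ, Nat.sub_self, pow_zero, one_mul, ← hsum]
    ring
end

section
/- Let (U_n) and (V_n) be two recursive systems (each satisfying W_{n+1} =_d (W_{n,1}+...+W_{n,m}−1)^+ for i.i.d. copies) coupled so that U_0 ≥ V_0 almost surely, with E(U_0) < ∞. Then for all n ≥ 0: 0 ≤ E(U_n) − E(V_n) ≤ m^n · (E(U_0) − E(V_0)). -/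
open scoped ENNReal

namespace DRaux

lemma tsum_bind_mul {α β : Type*} (p : PMF α) (g : α → PMF β) (h : β → ℝ≥0∞) :
    ∑' b, (p.bind g) b * h b = ∑' a, p a * ∑' b, g a b * h b := by
  simp only [PMF.bind_apply]
  calc ∑' b, (∑' a, p a * g a b) * h b
      = ∑' b, ∑' a, p a * g a b * h b := by
        congr 1; ext b; rw [ENNReal.tsum_mul_right]
    _ = ∑' a, ∑' b, p a * g a b * h b := ENNReal.tsum_comm
    _ = ∑' a, p a * ∑' b, g a b * h b := by
        congr 1; ext a; rw [← ENNReal.tsum_mul_left]; congr 1; ext b; ring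

lemma tsum_map_mul {α β : Type*} (p : PMF α) (f : α → β) (h : β → ℝ≥0∞) :
    ∑' b, (p.map f) b * h b = ∑' a, p a * h (f a) := by
  rw [PMF.map, tsum_bind_mul]
  congr 1; ext a
  congr 1
  rw [tsum_eq_single (f a)]
  · simp [PMF.pure_apply]
  · intro b hb; simp [PMF.pure_apply, hb]

/-- ENNReal-valued expectation. -/
noncomputable def EE (p : PMF ℕ) : ℝ≥0∞ := ∑' k, p k * k

lemma EE_sumIID (p : PMF ℕ) (k : ℕ) : EE (sumIID p k) = k * EE p := by
  induction k with
  | zero =>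
    simp only [sumIID, EE]
    rw [tsum_eq_single 0]
    · simp
    · intro b hb; simp [PMF.pure_apply, hb]
  | succ k ih =>
    rw [sumIID, EE, tsum_bind_mul]
    have h1 : ∀ s : ℕ, ∑' b, (p.map (fun a => a + s)) b * (b : ℝ≥0∞)
        = EE p + s := by
      intro s
      rw [tsum_map_mul]
      have : ∀ a : ℕ, p a * ((a + s : ℕ) : ℝ≥0∞) = p a * a + p a * s := by
        intro a; push_cast; ring
      rw [tsum_congr this, ENNReal.tsum_add, ENNReal.tsum_mul_right, PMF.tsum_coe,
        one_mul]
      rfl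
    rw [tsum_congr (fun s => by rw [h1 s])]
    have : ∀ s : ℕ, sumIID p k s * (EE p + s) = sumIID p k s * EE p + sumIID p k s * s := by
      intro s; ring
    rw [tsum_congr this, ENNReal.tsum_add, ENNReal.tsum_mul_right, PMF.tsum_coe, one_mul]
    have : (∑' s, sumIID p k s * (s : ℝ≥0∞)) = EE (sumIID p k) := rfl
    rw [this, ih]
    push_cast
    ring

lemma EE_step_le (m : ℕ) (p : PMF ℕ) : EE (step m p) ≤ m * EE p := by
  rw [step, EE, tsum_map_mul, ← EE_sumIID p m, EE]
  refine ENNReal.tsum_le_tsum fun s => ?_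
  exact mul_le_mul_right (by exact_mod_cast Nat.sub_le s 1) _

/-- iid sums of the coupled pair. -/
noncomputable def sumIID2 (J : PMF (ℕ × ℕ)) : ℕ → PMF (ℕ × ℕ)
  | 0 => PMF.pure (0, 0)
  | (k+1) => (sumIID2 J k).bind (fun s => J.map (fun a => (a.1 + s.1, a.2 + s.2)))

noncomputable def step2 (m : ℕ) (J : PMF (ℕ × ℕ)) : PMF (ℕ × ℕ) :=
  (sumIID2 J m).map (fun q => (q.1 - 1, q.2 - 1))

noncomputable def Jseq (m : ℕ) (J : PMF (ℕ × ℕ)) : ℕ → PMF (ℕ × ℕ)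
  | 0 => J
  | (n+1) => step2 m (Jseq m J n)

lemma sumIID2_map (J : PMF (ℕ × ℕ)) (φ : ℕ × ℕ → ℕ) (hφ0 : φ (0, 0) = 0)
    (hφ : ∀ a s : ℕ × ℕ, φ (a.1 + s.1, a.2 + s.2) = φ a + φ s) (k : ℕ) :
    (sumIID2 J k).map φ = sumIID (J.map φ) k := by
  induction k with
  | zero => rw [sumIID2, sumIID, PMF.pure_map, hφ0]
  | succ k ih =>
    rw [sumIID2, sumIID, PMF.map_bind]
    have h1 : (fun s : ℕ × ℕ => (J.map (fun a => (a.1 + s.1, a.2 + s.2))).map φ)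
        = (fun t : ℕ => (J.map φ).map (fun x => x + t)) ∘ φ := by
      funext s
      rw [PMF.map_comp]
      show _ = (J.map φ).map (fun x => x + φ s)
      rw [PMF.map_comp]
      congr 1
      funext a
      exact hφ a s
    rw [h1, ← PMF.bind_map, ih]

lemma step2_map (m : ℕ) (J : PMF (ℕ × ℕ)) (φ : ℕ × ℕ → ℕ) (hφ0 : φ (0, 0) = 0)
    (hφ : ∀ a s : ℕ × ℕ, φ (a.1 + s.1, a.2 + s.2) = φ a + φ s)
    (hsub : ∀ q : ℕ × ℕ, φ (q.1 - 1, q.2 - 1) = φ q - 1) :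
    (step2 m J).map φ = step m (J.map φ) := by
  rw [step2, step, PMF.map_comp, ← sumIID2_map J φ hφ0 hφ m, PMF.map_comp]
  congr 1
  funext q
  exact hsub q

lemma sumIID2_dom (J : PMF (ℕ × ℕ)) (hd : ∀ q ∈ J.support, q.2 ≤ q.1) (k : ℕ) :
    ∀ q ∈ (sumIID2 J k).support, q.2 ≤ q.1 := by
  induction k with
  | zero =>
    intro q hq
    rw [sumIID2, PMF.support_pure] at hq
    simp only [Set.mem_singleton_iff] at hq
    simp [hq]
  | succ k ih =>
    intro q hq
    rw [sumIID2, PMF.support_bind] at hq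
    simp only [Set.mem_iUnion, PMF.support_map, Set.mem_image] at hq
    obtain ⟨s, hs, a, ha, rfl⟩ := hq
    have := ih s hs
    have := hd a ha
    simp only
    omega

/-- coupled expected difference. -/
noncomputable def D (J : PMF (ℕ × ℕ)) : ℝ≥0∞ :=
  ∑' q : ℕ × ℕ, J q * ((q.1 - q.2 : ℕ) : ℝ≥0∞)

lemma D_sumIID2 (J : PMF (ℕ × ℕ)) (hd : ∀ q ∈ J.support, q.2 ≤ q.1) (k : ℕ) :
    D (sumIID2 J k) = k * D J := by
  induction k with
  | zero =>
    simp only [sumIID2, D]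
    rw [tsum_eq_single (0, 0)]
    · simp
    · intro b hb; rw [PMF.pure_apply, if_neg hb, zero_mul]
  | succ k ih =>
    rw [sumIID2, D, tsum_bind_mul]
    have h1 : ∀ s ∈ (sumIID2 J k).support,
        ∑' b : ℕ × ℕ, (J.map (fun a => (a.1 + s.1, a.2 + s.2))) b * ((b.1 - b.2 : ℕ) : ℝ≥0∞)
        = D J + ((s.1 - s.2 : ℕ) : ℝ≥0∞) := by
      intro s hs
      have hs2 := sumIID2_dom J hd k s hs
      rw [tsum_map_mul]
      have key : ∀ a : ℕ × ℕ, J a * (((a.1 + s.1) - (a.2 + s.2) : ℕ) : ℝ≥0∞)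
          = J a * ((a.1 - a.2 : ℕ) : ℝ≥0∞) + J a * ((s.1 - s.2 : ℕ) : ℝ≥0∞) := by
        intro a
        by_cases ha : J a = 0
        · simp [ha]
        · have ha2 := hd a (by simpa [PMF.mem_support_iff] using ha)
          have : (a.1 + s.1) - (a.2 + s.2) = (a.1 - a.2) + (s.1 - s.2) := by omega
          rw [this]
          push_cast
          ring
      rw [tsum_congr key, ENNReal.tsum_add, ENNReal.tsum_mul_right, PMF.tsum_coe, one_mul]
      rfl
    have h2 : ∀ s : ℕ × ℕ, sumIID2 J k s *
        (∑' b : ℕ × ℕ, (J.map (fun a => (a.1 + s.1, a.2 + s.2))) b * ((b.1 - b.2 : ℕ) : ℝ≥0∞))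
        = sumIID2 J k s * D J + sumIID2 J k s * ((s.1 - s.2 : ℕ) : ℝ≥0∞) := by
      intro s
      by_cases hs : sumIID2 J k s = 0
      · simp [hs]
      · rw [h1 s (by simpa [PMF.mem_support_iff] using hs)]; ring
    rw [tsum_congr h2, ENNReal.tsum_add, ENNReal.tsum_mul_right, PMF.tsum_coe, one_mul]
    have : (∑' s : ℕ × ℕ, sumIID2 J k s * ((s.1 - s.2 : ℕ) : ℝ≥0∞)) = D (sumIID2 J k) := rfl
    rw [this, ih]
    push_cast
    ring

lemma D_step2_le (m : ℕ) (J : PMF (ℕ × ℕ)) (hd : ∀ q ∈ J.support, q.2 ≤ q.1) :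
    D (step2 m J) ≤ m * D J := by
  rw [step2, D, tsum_map_mul, ← D_sumIID2 J hd m, D]
  refine ENNReal.tsum_le_tsum fun q => mul_le_mul_right ?_ _
  exact_mod_cast (by omega : (q.1 - 1) - (q.2 - 1) ≤ q.1 - q.2)

lemma step2_dom (m : ℕ) (J : PMF (ℕ × ℕ)) (hd : ∀ q ∈ J.support, q.2 ≤ q.1) :
    ∀ q ∈ (step2 m J).support, q.2 ≤ q.1 := by
  intro q hq
  rw [step2, PMF.support_map] at hq
  obtain ⟨s, hs, rfl⟩ := hq
  have := sumIID2_dom J hd m s hs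
  simp only
  omega

lemma EE_split (J : PMF (ℕ × ℕ)) (hd : ∀ q ∈ J.support, q.2 ≤ q.1) :
    EE (J.map Prod.fst) = EE (J.map Prod.snd) + D J := by
  rw [EE, EE, D, tsum_map_mul, tsum_map_mul]
  have key : ∀ q : ℕ × ℕ, J q * (q.1 : ℝ≥0∞)
      = J q * (q.2 : ℝ≥0∞) + J q * ((q.1 - q.2 : ℕ) : ℝ≥0∞) := by
    intro q
    by_cases hq : J q = 0
    · simp [hq]
    · have h2 := hd q (by simpa [PMF.mem_support_iff] using hq)
      have : q.1 = q.2 + (q.1 - q.2) := by omega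
      have hcast : (q.1 : ℝ≥0∞) = (q.2 : ℝ≥0∞) + ((q.1 - q.2 : ℕ) : ℝ≥0∞) := by
        rw [← Nat.cast_add]
        exact Nat.cast_inj.mpr this
      rw [hcast]
      ring
  rw [tsum_congr key, ENNReal.tsum_add]

lemma D_le_EE (J : PMF (ℕ × ℕ)) : D J ≤ EE (J.map Prod.fst) := by
  rw [D, EE, tsum_map_mul]
  refine ENNReal.tsum_le_tsum fun q => mul_le_mul_right ?_ _
  exact_mod_cast Nat.sub_le q.1 q.2

end DRaux

open DRaux in
theorem stmt13 (m : ℕ) (hm : 2 ≤ m) (U V : ℕ → PMF ℕ)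
    (hU : ∀ n, U (n+1) = step m (U n)) (hV : ∀ n, V (n+1) = step m (V n))
    -- a coupling of the initial laws under which `U₀ ≥ V₀` almost surely:
    (J : PMF (ℕ × ℕ)) (hJ1 : J.map Prod.fst = U 0) (hJ2 : J.map Prod.snd = V 0)
    (hJdom : ∀ q ∈ J.support, q.2 ≤ q.1)
    (hEU : (∑' k, U 0 k * (k : ℝ≥0∞)) < ∞) :
    ∀ n, 0 ≤ realE (U n) - realE (V n) ∧
      realE (U n) - realE (V n) ≤ (m : ℝ) ^ n * (realE (U 0) - realE (V 0)) := by
  -- main induction giving the coupling at every time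
  have key : ∀ n, (Jseq m J n).map Prod.fst = U n ∧ (Jseq m J n).map Prod.snd = V n ∧
      (∀ q ∈ (Jseq m J n).support, q.2 ≤ q.1) ∧
      D (Jseq m J n) ≤ (m : ℝ≥0∞) ^ n * D J := by
    intro n
    induction n with
    | zero => exact ⟨hJ1, hJ2, hJdom, by simp [Jseq]⟩
    | succ n ih =>
      obtain ⟨h1, h2, h3, h4⟩ := ih
      refine ⟨?_, ?_, step2_dom m _ h3, ?_⟩
      · rw [Jseq, step2_map m _ Prod.fst rfl (fun _ _ => rfl) (fun _ => rfl), h1, hU]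
      · rw [Jseq, step2_map m _ Prod.snd rfl (fun _ _ => rfl) (fun _ => rfl), h2, hV]
      · calc D (Jseq m J (n+1)) ≤ m * D (Jseq m J n) := D_step2_le m _ h3
          _ ≤ m * ((m : ℝ≥0∞) ^ n * D J) := mul_le_mul_right h4 _
          _ = (m : ℝ≥0∞) ^ (n+1) * D J := by ring
  -- finiteness of EE (U n)
  have hEU0 : EE (U 0) ≠ ⊤ := hEU.ne
  have hfin : ∀ n, EE (U n) ≠ ⊤ := by
    intro n
    induction n with
    | zero => exact hEU0
    | succ n ih =>
      rw [hU n]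
      exact ne_top_of_le_ne_top (ENNReal.mul_ne_top (ENNReal.natCast_ne_top m) ih)
        (EE_step_le m (U n))
  have hDJ : D J ≠ ⊤ := ne_top_of_le_ne_top (by rw [hJ1]; exact hfin 0) (D_le_EE J)
  intro n
  obtain ⟨h1, h2, h3, h4⟩ := key n
  have hsplit : EE (U n) = EE (V n) + D (Jseq m J n) := by
    rw [← h1, ← h2]; exact EE_split _ h3
  have hDn : D (Jseq m J n) ≠ ⊤ :=
    ne_top_of_le_ne_top (hfin n) (by rw [hsplit]; exact le_add_self)
  have hVfin : EE (V n) ≠ ⊤ :=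
    ne_top_of_le_ne_top (hfin n) (by rw [hsplit]; exact le_self_add)
  have hdiff : realE (U n) - realE (V n) = (D (Jseq m J n)).toReal := by
    show (EE (U n)).toReal - (EE (V n)).toReal = _
    rw [hsplit, ENNReal.toReal_add hVfin hDn]
    ring
  have hdiff0 : realE (U 0) - realE (V 0) = (D J).toReal := by
    obtain ⟨h1', h2', h3', _⟩ := key 0
    have hsplit0 : EE (U 0) = EE (V 0) + D (Jseq m J 0) := by
      rw [← h1', ← h2']; exact EE_split _ h3'
    have hD0 : D (Jseq m J 0) ≠ ⊤ :=
      ne_top_of_le_ne_top (hfin 0) (by rw [hsplit0]; exact le_add_self)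
    have hV0 : EE (V 0) ≠ ⊤ :=
      ne_top_of_le_ne_top (hfin 0) (by rw [hsplit0]; exact le_self_add)
    show (EE (U 0)).toReal - (EE (V 0)).toReal = _
    rw [hsplit0, ENNReal.toReal_add hV0 hD0]
    show _ = (D (Jseq m J 0)).toReal
    ring
  constructor
  · rw [hdiff]; exact ENNReal.toReal_nonneg
  · rw [hdiff, hdiff0]
    calc (D (Jseq m J n)).toReal ≤ ((m : ℝ≥0∞) ^ n * D J).toReal := by
          refine ENNReal.toReal_mono ?_ h4
          exact ENNReal.mul_ne_top (by simp [ENNReal.pow_ne_top, ENNReal.natCast_ne_top]) hDJ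
      _ = (m : ℝ) ^ n * (D J).toReal := by
          rw [ENNReal.toReal_mul, ENNReal.toReal_pow, ENNReal.toReal_natCast]
end
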